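/- arXiv:2403.13724 — 5 statements merged into one kernel-verified Lean document; each statement's English description precedes it below -/
import Mathlib

section
/- Let d ≥ 1 and let p : ℝ^d → [0,∞) be a probability density satisfying an exponential tail bound: there exist C₁, C₂ > 0 with p(x₁) ≤ C₂ exp(−C₁|x₁|) for all x₁ ∈ ℝ^d. Let α, β, σ : [0,1] → ℝ be continuous with α(0) = 1, β(0) = 0, β differentiable at 0 with β'(0) = 0, β_s > 0 for s ∈ (0,1], and σ(0) > 0. Then for every fixed x, x₀ ∈ ℝ^d, lim_{s→0⁺} η₁(s,x,x₀) = ∫_{ℝ^d} x₁ p(x₁) dx₁, i.e. the conditional-mean function η₁ converges to the mean of p as s → 0⁺. -/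
open MeasureTheory Filter Topology

open scoped RealInnerProductSpace

lemma exp_split {d : ℕ} (v w : EuclideanSpace ℝ (Fin d)) (b t : ℝ) (ht : t ≠ 0) :
    Real.exp (-‖v - b • w‖ ^ 2 / (2 * t)) =
    Real.exp (-‖v‖ ^ 2 / (2 * t)) *
      Real.exp (b / t * ⟪v, w⟫ - b / t * b / 2 * ‖w‖ ^ 2) := by
  rw [← Real.exp_add]
  congr 1
  have h1 : ‖v - b • w‖ ^ 2 = ‖v‖ ^ 2 - 2 * (b * ⟪v, w⟫) + b ^ 2 * ‖w‖ ^ 2 := by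
    rw [norm_sub_sq_real, real_inner_smul_right, norm_smul]
    simp [mul_pow, Real.norm_eq_abs, sq_abs]
  rw [h1]
  field_simp
  ring

lemma int_exp_norm (d : ℕ) (a : ℝ) (ha : 0 < a) :
    Integrable (fun x : EuclideanSpace ℝ (Fin d) => Real.exp (-(a * ‖x‖))) := by
  set b : ℝ := a / (d + 1) with hb
  have hb0 : 0 < b := by positivity
  set M : ℝ := max 1 b⁻¹ with hM
  have hM1 : (1 : ℝ) ≤ M := le_max_left _ _
  have hM0 : (0 : ℝ) < M := lt_of_lt_of_le one_pos hM1
  have hMb : 1 ≤ M * b := by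
    calc (1:ℝ) = b⁻¹ * b := (inv_mul_cancel₀ hb0.ne').symm
    _ ≤ M * b := mul_le_mul_of_nonneg_right (le_max_right _ _) hb0.le
  have key : ∀ t : ℝ, 0 ≤ t →
      Real.exp (-(a * t)) ≤ M ^ (d + 1) * (1 + t) ^ (-((d : ℝ) + 1)) := by
    intro t ht
    have h1 : 1 + t ≤ M * Real.exp (b * t) := by
      have e1 : 1 + t ≤ M * (1 + b * t) := by
        have : t ≤ (M * b) * t := le_mul_of_one_le_left ht hMb
        nlinarith
      have e2 : M * (1 + b * t) ≤ M * Real.exp (b * t) := by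
        have := Real.add_one_le_exp (b * t)
        nlinarith
      linarith
    have h2 : (1 + t) ^ (d + 1) ≤ M ^ (d + 1) * Real.exp (a * t) := by
      calc (1 + t) ^ (d + 1) ≤ (M * Real.exp (b * t)) ^ (d + 1) :=
            pow_le_pow_left₀ (by linarith) h1 _
        _ = M ^ (d + 1) * Real.exp (b * t) ^ (d + 1) := mul_pow _ _ _
        _ = M ^ (d + 1) * Real.exp (a * t) := by
            rw [← Real.exp_nat_mul]
            congr 2
            rw [hb]
            field_simp
            push_cast
            ring
    have hpos : (0:ℝ) < 1 + t := by linarith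
    have hrw : (1 + t) ^ (-((d : ℝ) + 1)) = ((1 + t) ^ (d + 1))⁻¹ := by
      rw [← Real.rpow_natCast (1 + t) (d + 1), ← Real.rpow_neg hpos.le]
      congr 1
      push_cast
      ring
    rw [hrw, ← div_eq_mul_inv, le_div_iff₀ (by positivity)]
    have hee : Real.exp (-(a * t)) * Real.exp (a * t) = 1 := by
      rw [← Real.exp_add]; simp
    calc Real.exp (-(a * t)) * (1 + t) ^ (d + 1)
        ≤ Real.exp (-(a * t)) * (M ^ (d + 1) * Real.exp (a * t)) :=
          mul_le_mul_of_nonneg_left h2 (Real.exp_pos _).le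
      _ = M ^ (d + 1) := by rw [← mul_assoc, mul_comm (Real.exp _) (M ^ (d+1)), mul_assoc, hee, mul_one]
  have hr : (Module.finrank ℝ (EuclideanSpace ℝ (Fin d)) : ℝ) < (d : ℝ) + 1 := by
    simp [finrank_euclideanSpace]
  refine ((integrable_one_add_norm (r := (d : ℝ) + 1) hr).const_mul
    (M ^ (d + 1))).mono' ?_ ?_
  · exact Continuous.aestronglyMeasurable (by fun_prop)
  · filter_upwards with x
    rw [Real.norm_eq_abs, abs_of_pos (Real.exp_pos _)]
    exact key ‖x‖ (norm_nonneg _)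

/-- The conditional-mean function `η₁(s,x,x₀)` of the stochastic interpolant, written as a ratio of
Gaussian-smoothed integrals against the density `p`. -/
noncomputable def eta1 {d : ℕ} (p : EuclideanSpace ℝ (Fin d) → ℝ) (αs βs σs s : ℝ)
    (x x₀ : EuclideanSpace ℝ (Fin d)) : EuclideanSpace ℝ (Fin d) :=
  (∫ x₁, p x₁ * Real.exp (-‖x - αs • x₀ - βs • x₁‖ ^ 2 / (2 * s * σs ^ 2)))⁻¹ •
    ∫ x₁, (p x₁ * Real.exp (-‖x - αs • x₀ - βs • x₁‖ ^ 2 / (2 * s * σs ^ 2))) • x₁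

/-- For a probability density `p` with exponential tails and interpolant
coefficients with `α(0) = 1`, `β(0) = 0`, `β'(0) = 0`, `σ(0) > 0`, the conditional-mean function
`η₁(s,x,x₀)` converges to the mean of `p` as `s → 0⁺`. -/
theorem eta1_tendsto_mean
    (d : ℕ) (hd : 1 ≤ d)
    (p : EuclideanSpace ℝ (Fin d) → ℝ) (hp0 : ∀ x₁, 0 ≤ p x₁)
    (hpd : ∫ x₁, p x₁ = 1)
    (C₁ C₂ : ℝ) (hC₁ : 0 < C₁) (hC₂ : 0 < C₂)
    (htail : ∀ x₁, p x₁ ≤ C₂ * Real.exp (-C₁ * ‖x₁‖))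
    (α β σ : ℝ → ℝ)
    (hαc : ContinuousOn α (Set.Icc 0 1)) (hβc : ContinuousOn β (Set.Icc 0 1))
    (hσc : ContinuousOn σ (Set.Icc 0 1))
    (hα0 : α 0 = 1) (hβ0 : β 0 = 0)
    (hβdiff : HasDerivWithinAt β 0 (Set.Icc 0 1) 0)
    (hβpos : ∀ s ∈ Set.Ioc (0 : ℝ) 1, 0 < β s)
    (hσ0 : 0 < σ 0) :
    ∀ x x₀ : EuclideanSpace ℝ (Fin d),
      Tendsto (fun s => eta1 p (α s) (β s) (σ s) s x x₀)
        (nhdsWithin 0 (Set.Ioc 0 1)) (nhds (∫ x₁, p x₁ • x₁)) := by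
  intro x x₀
  set l := nhdsWithin (0:ℝ) (Set.Ioc 0 1) with hl
  have h0Icc : (0:ℝ) ∈ Set.Icc (0:ℝ) 1 := Set.mem_Icc.mpr ⟨le_refl _, zero_le_one⟩
  have hmono : l ≤ nhdsWithin (0:ℝ) (Set.Icc 0 1) := nhdsWithin_mono _ Set.Ioc_subset_Icc_self
  -- integrability of p
  have hpInt : Integrable p := by
    by_contra h
    rw [integral_undef h] at hpd
    norm_num at hpd
  -- basic limits
  have hσt : Tendsto σ l (𝓝 (σ 0)) := ((hσc 0 h0Icc).mono_left hmono)
  have hβt : Tendsto β l (𝓝 0) := by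
    have := (hβc 0 h0Icc).mono_left hmono
    rwa [hβ0] at this
  have hαt : Tendsto α l (𝓝 1) := by
    have := (hαc 0 h0Icc).mono_left hmono
    rwa [hα0] at this
  have hslope : Tendsto (fun s => β s / s) l (𝓝 0) := by
    have h := hasDerivWithinAt_iff_tendsto_slope.mp hβdiff
    have hsub : Set.Ioc (0:ℝ) 1 ⊆ Set.Icc 0 1 \ {0} :=
      fun s hs => ⟨Set.Ioc_subset_Icc_self hs, ne_of_gt hs.1⟩
    have h2 : Tendsto (slope β 0) l (𝓝 0) := h.mono_left (nhdsWithin_mono _ hsub)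
    refine h2.congr fun s => ?_
    simp [slope, hβ0, div_eq_inv_mul]
  set v : ℝ → EuclideanSpace ℝ (Fin d) := fun s => x - α s • x₀ with hv_def
  set ρ : ℝ → ℝ := fun s => β s / (s * σ s ^ 2) with hρ_def
  have hρt : Tendsto ρ l (𝓝 0) := by
    have h := hslope.div (hσt.pow 2) (pow_ne_zero 2 hσ0.ne')
    simp only [zero_div] at h
    refine h.congr fun s => ?_
    show β s / s / σ s ^ 2 = ρ s
    rw [div_div]
  have hvt : Tendsto v l (𝓝 (x - x₀)) := by
    have h1 : Tendsto (fun s => α s • x₀) l (𝓝 ((1:ℝ) • x₀)) := hαt.smul_const x₀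
    rw [one_smul] at h1
    exact tendsto_const_nhds.sub h1
  have hρv : Tendsto (fun s => ρ s * ‖v s‖) l (𝓝 0) := by
    simpa using hρt.mul hvt.norm
  have hρβ : Tendsto (fun s => ρ s * β s) l (𝓝 0) := by
    simpa using hρt.mul hβt
  -- the renormalized integrand
  set g : ℝ → EuclideanSpace ℝ (Fin d) → ℝ := fun s x₁ =>
    p x₁ * Real.exp (ρ s * ⟪v s, x₁⟫ - ρ s * β s / 2 * ‖x₁‖ ^ 2) with hg_def
  have hg_nonneg : ∀ s x₁, 0 ≤ g s x₁ := fun s x₁ =>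
    mul_nonneg (hp0 x₁) (Real.exp_pos _).le
  have hgm : ∀ s, AEStronglyMeasurable (g s) volume := by
    intro s
    have hcont : Continuous fun x₁ : EuclideanSpace ℝ (Fin d) =>
        Real.exp (ρ s * ⟪v s, x₁⟫ - ρ s * β s / 2 * ‖x₁‖ ^ 2) :=
      Real.continuous_exp.comp
        (((continuous_const.mul (continuous_const.inner continuous_id)).sub
          (continuous_const.mul (continuous_norm.pow 2))))
    exact hpInt.aestronglyMeasurable.mul hcont.aestronglyMeasurable
  -- eventual facts
  have hsmem : ∀ᶠ s in l, s ∈ Set.Ioc (0:ℝ) 1 := eventually_mem_nhdsWithin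
  have hσpos : ∀ᶠ s in l, 0 < σ s := hσt.eventually (eventually_gt_nhds hσ0)
  have hρvsm : ∀ᶠ s in l, ρ s * ‖v s‖ ≤ C₁ / 2 :=
    hρv.eventually (eventually_le_nhds (half_pos hC₁))
  have hev : ∀ᶠ s in l, s ∈ Set.Ioc (0:ℝ) 1 ∧ 0 < σ s ∧ ρ s * ‖v s‖ ≤ C₁ / 2 :=
    hsmem.and (hσpos.and hρvsm)
  -- pointwise bound
  have hbound : ∀ s, s ∈ Set.Ioc (0:ℝ) 1 → 0 < σ s → ρ s * ‖v s‖ ≤ C₁ / 2 →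
      ∀ x₁, g s x₁ ≤ C₂ * Real.exp (-(C₁ / 2 * ‖x₁‖)) := by
    intro s hs hσs hρs x₁
    have hρ0 : 0 ≤ ρ s := by
      exact le_of_lt (div_pos (hβpos s hs) (mul_pos hs.1 (pow_pos hσs 2)))
    have hE : ρ s * ⟪v s, x₁⟫ - ρ s * β s / 2 * ‖x₁‖ ^ 2 ≤ C₁ / 2 * ‖x₁‖ := by
      have h1 : ρ s * ⟪v s, x₁⟫ ≤ ρ s * (‖v s‖ * ‖x₁‖) :=
        mul_le_mul_of_nonneg_left (real_inner_le_norm _ _) hρ0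
      have h2 : ρ s * (‖v s‖ * ‖x₁‖) ≤ C₁ / 2 * ‖x₁‖ := by
        rw [← mul_assoc]
        exact mul_le_mul_of_nonneg_right hρs (norm_nonneg _)
      have h3 : 0 ≤ ρ s * β s / 2 * ‖x₁‖ ^ 2 :=
        mul_nonneg (div_nonneg (mul_nonneg hρ0 (hβpos s hs).le) (by norm_num))
          (by positivity)
      linarith
    calc g s x₁ ≤ (C₂ * Real.exp (-C₁ * ‖x₁‖)) * Real.exp (C₁ / 2 * ‖x₁‖) :=
          mul_le_mul (htail x₁) (Real.exp_le_exp.mpr hE) (Real.exp_pos _).le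
            (by positivity)
      _ = C₂ * Real.exp (-(C₁ / 2 * ‖x₁‖)) := by
          rw [mul_assoc, ← Real.exp_add]
          congr 2
          ring
  -- DCT for the denominator
  have hDen : Tendsto (fun s => ∫ x₁, g s x₁) l (𝓝 1) := by
    rw [← hpd]
    apply tendsto_integral_filter_of_dominated_convergence
      (fun x₁ => C₂ * Real.exp (-(C₁ / 2 * ‖x₁‖)))
    · exact Eventually.of_forall hgm
    · filter_upwards [hev] with s hs
      filter_upwards with x₁
      rw [Real.norm_eq_abs, abs_of_nonneg (hg_nonneg s x₁)]
      exact hbound s hs.1 hs.2.1 hs.2.2 x₁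
    · exact (int_exp_norm d (C₁ / 2) (by positivity)).const_mul C₂
    · filter_upwards with x₁
      have hEt : Tendsto (fun s => ρ s * ⟪v s, x₁⟫ - ρ s * β s / 2 * ‖x₁‖ ^ 2) l (𝓝 0) := by
        have h1 : Tendsto (fun s => ρ s * ⟪v s, x₁⟫) l (𝓝 0) := by
          have hin : Tendsto (fun s => (⟪v s, x₁⟫ : ℝ)) l (𝓝 ⟪x - x₀, x₁⟫) :=
            hvt.inner tendsto_const_nhds
          simpa using hρt.mul hin
        have h2 : Tendsto (fun s => ρ s * β s / 2 * ‖x₁‖ ^ 2) l (𝓝 0) := by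
          simpa using (hρβ.div_const 2).mul_const (‖x₁‖ ^ 2)
        simpa using h1.sub h2
      have hexp : Tendsto (fun s => Real.exp (ρ s * ⟪v s, x₁⟫ - ρ s * β s / 2 * ‖x₁‖ ^ 2))
          l (𝓝 1) := by
        simpa [Function.comp_def] using (Real.continuous_exp.tendsto 0).comp hEt
      have hc : Tendsto (fun _ : ℝ => p x₁) l (𝓝 (p x₁)) := tendsto_const_nhds
      simpa using hc.mul hexp
  -- DCT for the numerator
  have hNum : Tendsto (fun s => ∫ x₁, g s x₁ • x₁) l (𝓝 (∫ x₁, p x₁ • x₁)) := by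
    apply tendsto_integral_filter_of_dominated_convergence
      (fun x₁ => (4 / C₁ * C₂) * Real.exp (-(C₁ / 4 * ‖x₁‖)))
    · exact Eventually.of_forall fun s => (hgm s).smul aestronglyMeasurable_id
    · filter_upwards [hev] with s hs
      filter_upwards with x₁
      rw [norm_smul, Real.norm_eq_abs, abs_of_nonneg (hg_nonneg s x₁)]
      have h1 : g s x₁ * ‖x₁‖ ≤ (C₂ * Real.exp (-(C₁ / 2 * ‖x₁‖))) * ‖x₁‖ :=
        mul_le_mul_of_nonneg_right (hbound s hs.1 hs.2.1 hs.2.2 x₁) (norm_nonneg _)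
      have h2 : ‖x₁‖ ≤ 4 / C₁ * Real.exp (C₁ / 4 * ‖x₁‖) := by
        have h3 : C₁ / 4 * ‖x₁‖ + 1 ≤ Real.exp (C₁ / 4 * ‖x₁‖) := Real.add_one_le_exp _
        rw [div_mul_eq_mul_div, le_div_iff₀ hC₁]
        nlinarith
      calc g s x₁ * ‖x₁‖ ≤ (C₂ * Real.exp (-(C₁ / 2 * ‖x₁‖))) * (4 / C₁ * Real.exp (C₁ / 4 * ‖x₁‖)) := by
            refine le_trans h1 (mul_le_mul_of_nonneg_left h2 (by positivity))
        _ = (4 / C₁ * C₂) * Real.exp (-(C₁ / 4 * ‖x₁‖)) := by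
            rw [mul_mul_mul_comm, ← Real.exp_add,
              show -(C₁ / 2 * ‖x₁‖) + C₁ / 4 * ‖x₁‖ = -(C₁ / 4 * ‖x₁‖) by ring]
            ring
    · exact (int_exp_norm d (C₁ / 4) (by positivity)).const_mul _
    · filter_upwards with x₁
      have hEt : Tendsto (fun s => ρ s * ⟪v s, x₁⟫ - ρ s * β s / 2 * ‖x₁‖ ^ 2) l (𝓝 0) := by
        have h1 : Tendsto (fun s => ρ s * ⟪v s, x₁⟫) l (𝓝 0) := by
          have hin : Tendsto (fun s => (⟪v s, x₁⟫ : ℝ)) l (𝓝 ⟪x - x₀, x₁⟫) :=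
            hvt.inner tendsto_const_nhds
          simpa using hρt.mul hin
        have h2 : Tendsto (fun s => ρ s * β s / 2 * ‖x₁‖ ^ 2) l (𝓝 0) := by
          simpa using (hρβ.div_const 2).mul_const (‖x₁‖ ^ 2)
        simpa using h1.sub h2
      have hgt : Tendsto (fun s => g s x₁) l (𝓝 (p x₁)) := by
        have hexp : Tendsto (fun s => Real.exp (ρ s * ⟪v s, x₁⟫ - ρ s * β s / 2 * ‖x₁‖ ^ 2))
            l (𝓝 1) := by
          simpa [Function.comp_def] using (Real.continuous_exp.tendsto 0).comp hEt
        have hc : Tendsto (fun _ : ℝ => p x₁) l (𝓝 (p x₁)) := tendsto_const_nhds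
        simpa using hc.mul hexp
      exact hgt.smul_const x₁
  -- combine
  have hfinal : Tendsto (fun s => (∫ x₁, g s x₁)⁻¹ • ∫ x₁, g s x₁ • x₁) l
      (𝓝 (∫ x₁, p x₁ • x₁)) := by
    have := (hDen.inv₀ one_ne_zero).smul hNum
    simpa using this
  refine hfinal.congr' ?_
  filter_upwards [hsmem, hσpos] with s hs hσs
  have ht0 : s * σ s ^ 2 ≠ 0 := (mul_pos hs.1 (pow_pos hσs 2)).ne'
  set c : ℝ := Real.exp (-‖v s‖ ^ 2 / (2 * (s * σ s ^ 2))) with hc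
  have hcne : c ≠ 0 := (Real.exp_pos _).ne'
  have hfeq : ∀ x₁, p x₁ * Real.exp (-‖x - α s • x₀ - β s • x₁‖ ^ 2 / (2 * s * σ s ^ 2))
      = c * g s x₁ := by
    intro x₁
    have hxv : x - α s • x₀ - β s • x₁ = v s - β s • x₁ := rfl
    rw [hxv, show 2 * s * σ s ^ 2 = 2 * (s * σ s ^ 2) by ring,
      exp_split (v s) x₁ (β s) (s * σ s ^ 2) ht0]
    simp only [g, hρ_def, div_div]
    ring
  have hI : (∫ x₁, p x₁ * Real.exp (-‖x - α s • x₀ - β s • x₁‖ ^ 2 / (2 * s * σ s ^ 2)))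
      = c * ∫ x₁, g s x₁ := by
    simp_rw [hfeq]
    exact integral_const_mul c _
  have hJ : (∫ x₁, (p x₁ * Real.exp (-‖x - α s • x₀ - β s • x₁‖ ^ 2 / (2 * s * σ s ^ 2))) • x₁)
      = c • ∫ x₁, g s x₁ • x₁ := by
    simp_rw [hfeq, mul_smul]
    exact integral_smul c _
  rw [eta1, hI, hJ, mul_inv, smul_smul]
  congr 1
  rw [mul_comm c⁻¹, mul_assoc, inv_mul_cancel₀ hcne, mul_one]
end

section
/- Let d ≥ 1 and let p : ℝ^d → [0,∞) be a probability density satisfying an exponential tail bound: there exist C₁, C₂ > 0 with p(x₁) ≤ C₂ exp(−C₁|x₁|) for all x₁ ∈ ℝ^d. Let α, β, σ : [0,1] → ℝ be C¹ with α(0) = 1, β(0) = 0, β'(0) = 0, β_s > 0 for s ∈ (0,1], and σ(0) > 0. Then for every fixed x, x₀ ∈ ℝ^d: (i) lim_{s→0⁺} (x − α_s x₀ − β_s η₁(s,x,x₀))/σ_s = (x − x₀)/σ(0); and (ii) lim_{s→0⁺} b_s(x,x₀) = α'(0) x₀ + (σ'(0)/σ(0)) (x − x₀), where b_s(x,x₀)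 = α'_s x₀ + β'_s η₁(s,x,x₀) + σ'_s (x − α_s x₀ − β_s η₁(s,x,x₀))/σ_s. -/
open MeasureTheory Filter Topology

private lemma one_add_pow_le_exp {a t : ℝ} (ha : 0 < a) (ht : 0 ≤ t) (n : ℕ) (hn : 0 < n) :
    (1 + t) ^ n ≤ (1 + n / a) ^ n * Real.exp (a * t) := by
  have hn' : (0 : ℝ) < n := by exact_mod_cast hn
  have hu : 0 ≤ a * t / n := by positivity
  have h1 : 1 + t ≤ (1 + (n : ℝ) / a) * Real.exp (a * t / n) := by
    have h2 : a * t / n ≤ Real.exp (a * t / n) := by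
      have := Real.add_one_le_exp (a * t / n); linarith
    have ht' : t ≤ (n / a) * Real.exp (a * t / n) := by
      have heq : t = (n / a) * (a * t / n) := by field_simp
      nth_rewrite 1 [heq]
      exact mul_le_mul_of_nonneg_left h2 (by positivity)
    have hexp1 : (1 : ℝ) ≤ Real.exp (a * t / n) := Real.one_le_exp hu
    nlinarith [Real.exp_pos (a * t / n)]
  calc (1 + t) ^ n ≤ ((1 + (n : ℝ) / a) * Real.exp (a * t / n)) ^ n :=
        pow_le_pow_left₀ (by linarith) h1 n
    _ = (1 + (n : ℝ) / a) ^ n * Real.exp (a * t / n) ^ n := mul_pow _ _ _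
    _ = (1 + (n : ℝ) / a) ^ n * Real.exp (a * t) := by
        rw [← Real.exp_nat_mul]
        congr 1
        field_simp

private lemma integrable_exp_norm_bound (d : ℕ) {a : ℝ} (ha : 0 < a) :
    Integrable (fun x : EuclideanSpace ℝ (Fin d) => Real.exp (-a * ‖x‖) * (1 + ‖x‖)) := by
  have hfr : (Module.finrank ℝ (EuclideanSpace ℝ (Fin d)) : ℝ) < ((d : ℝ) + 1) := by
    rw [finrank_euclideanSpace_fin]; linarith
  have hint := (integrable_one_add_norm (E := EuclideanSpace ℝ (Fin d)) (μ := volume) hfr)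
  set C : ℝ := (1 + ((d : ℝ) + 2) / a) ^ (d + 2) with hC
  refine (hint.const_mul C).mono' ?_ ?_
  · exact (((Real.continuous_exp.comp (continuous_const.mul continuous_norm)).mul
      (continuous_const.add continuous_norm))).aestronglyMeasurable
  · filter_upwards with x
    have ht : (0 : ℝ) ≤ ‖x‖ := norm_nonneg x
    have hu : (0 : ℝ) < 1 + ‖x‖ := by linarith
    rw [Real.norm_eq_abs, abs_of_nonneg (by positivity)]
    have hkey : (1 + ‖x‖) ^ (d + 2) ≤ C * Real.exp (a * ‖x‖) := by
      have := one_add_pow_le_exp ha ht (d + 2) (by omega)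
      rw [hC]
      push_cast at this ⊢
      linarith
    have hrpow : (1 + ‖x‖) ^ (-((d : ℝ) + 1)) = ((1 + ‖x‖) ^ (d + 1 : ℕ))⁻¹ := by
      rw [← Real.rpow_natCast (1 + ‖x‖) (d + 1), ← Real.rpow_neg hu.le]
      push_cast
      ring_nf
    rw [hrpow, neg_mul, Real.exp_neg, inv_mul_le_iff₀ (Real.exp_pos _),
      show Real.exp (a * ‖x‖) * (C * ((1 + ‖x‖) ^ (d + 1))⁻¹)
        = (C * Real.exp (a * ‖x‖)) * ((1 + ‖x‖) ^ (d + 1))⁻¹ from by ring,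
      ← div_eq_mul_inv, le_div_iff₀ (pow_pos hu _), ← pow_succ']
    exact hkey

/-- The drift `b_s(x,x₀) = α'_s x₀ + β'_s η₁ + σ'_s (x − α_s x₀ − β_s η₁)/σ_s` of the
forecasting SDE. -/
noncomputable def drift {d : ℕ} (p : EuclideanSpace ℝ (Fin d) → ℝ)
    (αs βs σs αs' βs' σs' s : ℝ) (x x₀ : EuclideanSpace ℝ (Fin d)) :
    EuclideanSpace ℝ (Fin d) :=
  αs' • x₀ + βs' • eta1 p αs βs σs s x x₀ +
    (σs' / σs) • (x - αs • x₀ - βs • eta1 p αs βs σs s x x₀)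

set_option maxHeartbeats 1000000 in
/-- Limits at `s → 0⁺` of the normalized residual and of the drift `b_s`,
for a probability density with exponential tails and C¹ interpolant coefficients with
`α(0) = 1`, `β(0) = 0`, `β'(0) = 0`, `σ(0) > 0`. -/
theorem drift_limit_at_zero
    (d : ℕ) (hd : 1 ≤ d)
    (p : EuclideanSpace ℝ (Fin d) → ℝ) (hp0 : ∀ x₁, 0 ≤ p x₁)
    (hpd : ∫ x₁, p x₁ = 1)
    (C₁ C₂ : ℝ) (hC₁ : 0 < C₁) (hC₂ : 0 < C₂)
    (htail : ∀ x₁, p x₁ ≤ C₂ * Real.exp (-C₁ * ‖x₁‖))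
    (α β σ α' β' σ' : ℝ → ℝ)
    (hα : ∀ u ∈ Set.Icc (0 : ℝ) 1, HasDerivWithinAt α (α' u) (Set.Icc 0 1) u)
    (hβ : ∀ u ∈ Set.Icc (0 : ℝ) 1, HasDerivWithinAt β (β' u) (Set.Icc 0 1) u)
    (hσ : ∀ u ∈ Set.Icc (0 : ℝ) 1, HasDerivWithinAt σ (σ' u) (Set.Icc 0 1) u)
    (hα'c : ContinuousOn α' (Set.Icc 0 1)) (hβ'c : ContinuousOn β' (Set.Icc 0 1))
    (hσ'c : ContinuousOn σ' (Set.Icc 0 1))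
    (hα0 : α 0 = 1) (hβ0 : β 0 = 0) (hβ'0 : β' 0 = 0)
    (hβpos : ∀ s ∈ Set.Ioc (0 : ℝ) 1, 0 < β s)
    (hσ0 : 0 < σ 0) :
    ∀ x x₀ : EuclideanSpace ℝ (Fin d),
      Tendsto (fun s => (σ s)⁻¹ • (x - α s • x₀ - β s • eta1 p (α s) (β s) (σ s) s x x₀))
        (nhdsWithin 0 (Set.Ioc 0 1)) (nhds ((σ 0)⁻¹ • (x - x₀)))
      ∧
      Tendsto (fun s => drift p (α s) (β s) (σ s) (α' s) (β' s) (σ' s) s x x₀)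
        (nhdsWithin 0 (Set.Ioc 0 1)) (nhds (α' 0 • x₀ + (σ' 0 / σ 0) • (x - x₀))) := by
  intro x x₀
  set l : Filter ℝ := nhdsWithin 0 (Set.Ioc 0 1) with hl
  -- p is integrable
  have hpint : Integrable p := by
    by_contra h
    rw [MeasureTheory.integral_undef h] at hpd
    norm_num at hpd
  have h01 : (0 : ℝ) ∈ Set.Icc (0 : ℝ) 1 := by constructor <;> norm_num
  have hsub : Set.Ioc (0 : ℝ) 1 ⊆ Set.Icc 0 1 := Set.Ioc_subset_Icc_self
  have hmono : l ≤ nhdsWithin 0 (Set.Icc (0 : ℝ) 1) := nhdsWithin_mono _ hsub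
  -- continuity of coefficients at 0 along l
  have hαt : Tendsto α l (𝓝 1) := by
    have h := ((hα 0 h01).continuousWithinAt).mono_left hmono
    rwa [hα0] at h
  have hβt : Tendsto β l (𝓝 0) := by
    have h := ((hβ 0 h01).continuousWithinAt).mono_left hmono
    rwa [hβ0] at h
  have hσt : Tendsto σ l (𝓝 (σ 0)) := ((hσ 0 h01).continuousWithinAt).mono_left hmono
  have hσne : σ 0 ≠ 0 := ne_of_gt hσ0
  -- slope: β s / s → β' 0 = 0
  have hslope : Tendsto (fun s => β s / s) l (𝓝 0) := by
    have h1 := hasDerivWithinAt_iff_tendsto_slope.mp (hβ 0 h01)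
    rw [hβ'0] at h1
    have h2 : l ≤ nhdsWithin 0 (Set.Icc (0 : ℝ) 1 \ {0}) :=
      nhdsWithin_mono _ (fun s hs => ⟨hsub hs, ne_of_gt hs.1⟩)
    refine (h1.mono_left h2).congr' ?_
    filter_upwards [eventually_mem_nhdsWithin] with s hs
    simp [slope_def_field, hβ0]
  -- notation
  set m : ℝ → EuclideanSpace ℝ (Fin d) := fun s => x - α s • x₀ with hm
  set r : ℝ → ℝ := fun s => β s / (s * σ s ^ 2) with hr
  set q : ℝ → ℝ := fun s => β s ^ 2 / (2 * s * σ s ^ 2) with hq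
  set G : ℝ → EuclideanSpace ℝ (Fin d) → ℝ :=
    fun s x₁ => Real.exp (r s * (inner ℝ (m s) x₁ : ℝ) - q s * ‖x₁‖ ^ 2) with hG
  have hmt : Tendsto m l (𝓝 (x - x₀)) := by
    have := tendsto_const_nhds (x := x) (f := l) |>.sub (hαt.smul_const x₀)
    simpa [hm] using this
  have hσ2t : Tendsto (fun s => (σ s ^ 2)⁻¹) l (𝓝 ((σ 0 ^ 2)⁻¹)) :=
    ((hσt.pow 2).inv₀ (by positivity))
  have hrt : Tendsto r l (𝓝 0) := by
    have h := hslope.mul hσ2t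
    rw [zero_mul] at h
    refine h.congr fun s => ?_
    rw [hr]; ring
  have hqt : Tendsto q l (𝓝 0) := by
    have h := (hβt.mul hrt).div_const 2
    rw [zero_mul, zero_div] at h
    refine h.congr fun s => ?_
    rw [hq, hr]; ring
  -- key rewriting of eta1 in terms of G
  have hexp : ∀ (s : ℝ) (x₁ : EuclideanSpace ℝ (Fin d)),
      Real.exp (-‖x - α s • x₀ - β s • x₁‖ ^ 2 / (2 * s * σ s ^ 2))
        = Real.exp (-‖m s‖ ^ 2 / (2 * s * σ s ^ 2)) * G s x₁ := by
    intro s x₁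
    rw [hG, ← Real.exp_add]
    congr 1
    have h1 : x - α s • x₀ - β s • x₁ = m s - β s • x₁ := by rw [hm]
    rw [h1, norm_sub_sq_real (m s) (β s • x₁), real_inner_smul_right, norm_smul,
      mul_pow, Real.norm_eq_abs, sq_abs, hr, hq]
    rcases eq_or_ne (s * σ s ^ 2) 0 with h | h
    · have h2 : 2 * s * σ s ^ 2 = 2 * (s * σ s ^ 2) := by ring
      simp [h2, h]
    · have h2 : (2 : ℝ) * s * σ s ^ 2 = 2 * (s * σ s ^ 2) := by ring
      rw [h2]
      have hs : s ≠ 0 := fun hs0 => h (by rw [hs0]; ring)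
      have hσs : σ s ≠ 0 := fun hs0 => h (by rw [hs0]; ring)
      field_simp
      ring
  have hkey : ∀ s : ℝ, eta1 p (α s) (β s) (σ s) s x x₀
      = (∫ x₁, p x₁ * G s x₁)⁻¹ • ∫ x₁, (p x₁ * G s x₁) • x₁ := by
    intro s
    set c : ℝ := Real.exp (-‖m s‖ ^ 2 / (2 * s * σ s ^ 2)) with hc
    have hcne : c ≠ 0 := Real.exp_ne_zero _
    rw [eta1]
    simp only [hexp s]
    rw [show (fun x₁ => p x₁ * (c * G s x₁)) = fun x₁ => c * (p x₁ * G s x₁) from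
        funext fun x₁ => by ring,
      show (fun x₁ => (p x₁ * (c * G s x₁)) • x₁) = fun x₁ => c • ((p x₁ * G s x₁) • x₁) from
        funext fun x₁ => by rw [smul_smul]; ring_nf,
      integral_const_mul, integral_smul, smul_smul,
      show (c * ∫ x₁, p x₁ * G s x₁)⁻¹ * c = (∫ x₁, p x₁ * G s x₁)⁻¹ from by
        rw [mul_inv, mul_comm c⁻¹, mul_assoc, inv_mul_cancel₀ hcne, mul_one]]
  -- dominated convergence setup
  set B : EuclideanSpace ℝ (Fin d) → ℝ :=
    fun x₁ => C₂ * (Real.exp (-(C₁ / 2) * ‖x₁‖) * (1 + ‖x₁‖)) with hB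
  have hBint : Integrable B := (integrable_exp_norm_bound d (half_pos hC₁)).const_mul C₂
  have hGcont : ∀ s, Continuous (G s) := by
    intro s
    exact Real.continuous_exp.comp
      (((continuous_const.mul (continuous_const.inner continuous_id)).sub
        (continuous_const.mul (continuous_norm.pow 2))))
  have hmeas1 : ∀ᶠ s in l, AEStronglyMeasurable (fun x₁ => p x₁ * G s x₁) volume :=
    Eventually.of_forall fun s =>
      hpint.aestronglyMeasurable.mul (hGcont s).aestronglyMeasurable
  have hmeas2 : ∀ᶠ s in l,
      AEStronglyMeasurable (fun x₁ => (p x₁ * G s x₁) • x₁) volume :=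
    Eventually.of_forall fun s =>
      (hpint.aestronglyMeasurable.mul (hGcont s).aestronglyMeasurable).smul
        aestronglyMeasurable_id
  have hev1 : ∀ᶠ s in l, s ∈ Set.Ioc (0 : ℝ) 1 := eventually_mem_nhdsWithin
  have hev2 : ∀ᶠ s in l, |r s| * ‖m s‖ ≤ C₁ / 2 := by
    have h := hrt.mul hmt.norm
    rw [zero_mul] at h
    have h2 := Metric.tendsto_nhds.mp h (C₁ / 2) (by positivity)
    filter_upwards [h2] with s hs
    rw [Real.dist_eq, sub_zero, abs_mul, abs_norm] at hs
    exact hs.le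
  -- main pointwise bound
  have hbound : ∀ s ∈ Set.Ioc (0 : ℝ) 1, |r s| * ‖m s‖ ≤ C₁ / 2 →
      ∀ x₁, p x₁ * G s x₁ ≤ C₂ * Real.exp (-(C₁ / 2) * ‖x₁‖) := by
    intro s hs hrs x₁
    have hqnn : 0 ≤ q s := by
      rw [hq]
      exact div_nonneg (sq_nonneg _)
        (mul_nonneg (mul_nonneg (by norm_num) hs.1.le) (sq_nonneg _))
    have hGle : G s x₁ ≤ Real.exp (C₁ / 2 * ‖x₁‖) := by
      rw [hG]
      apply Real.exp_le_exp.mpr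
      have h1 : r s * (inner ℝ (m s) x₁ : ℝ) ≤ |r s| * (‖m s‖ * ‖x₁‖) := by
        calc r s * (inner ℝ (m s) x₁ : ℝ) ≤ |r s * (inner ℝ (m s) x₁ : ℝ)| := le_abs_self _
          _ = |r s| * |(inner ℝ (m s) x₁ : ℝ)| := abs_mul _ _
          _ ≤ |r s| * (‖m s‖ * ‖x₁‖) :=
            mul_le_mul_of_nonneg_left (abs_real_inner_le_norm _ _) (abs_nonneg _)
      have h2 : |r s| * (‖m s‖ * ‖x₁‖) ≤ C₁ / 2 * ‖x₁‖ := by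
        rw [← mul_assoc]
        exact mul_le_mul_of_nonneg_right hrs (norm_nonneg _)
      nlinarith [sq_nonneg ‖x₁‖, mul_nonneg hqnn (sq_nonneg ‖x₁‖)]
    calc p x₁ * G s x₁ ≤ (C₂ * Real.exp (-C₁ * ‖x₁‖)) * Real.exp (C₁ / 2 * ‖x₁‖) :=
          mul_le_mul (htail x₁) hGle (le_of_lt (Real.exp_pos _))
            (by positivity)
      _ = C₂ * Real.exp (-(C₁ / 2) * ‖x₁‖) := by
          rw [mul_assoc, ← Real.exp_add]
          congr 2
          ring
  have hGpos : ∀ s x₁, 0 < G s x₁ := fun s x₁ => Real.exp_pos _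
  have hbound1 : ∀ᶠ s in l, ∀ᵐ x₁, ‖p x₁ * G s x₁‖ ≤ B x₁ := by
    filter_upwards [hev1, hev2] with s hs1 hs2
    refine Eventually.of_forall fun x₁ => ?_
    rw [Real.norm_eq_abs, abs_of_nonneg (mul_nonneg (hp0 x₁) (hGpos s x₁).le), hB]
    have := hbound s hs1 hs2 x₁
    show p x₁ * G s x₁ ≤ C₂ * (Real.exp (-(C₁ / 2) * ‖x₁‖) * (1 + ‖x₁‖))
    have h5 : 0 ≤ C₂ * Real.exp (-(C₁ / 2) * ‖x₁‖) * ‖x₁‖ := by positivity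
    nlinarith [Real.exp_pos (-(C₁ / 2) * ‖x₁‖)]
  have hbound2 : ∀ᶠ s in l, ∀ᵐ x₁, ‖(p x₁ * G s x₁) • x₁‖ ≤ B x₁ := by
    filter_upwards [hev1, hev2] with s hs1 hs2
    refine Eventually.of_forall fun x₁ => ?_
    rw [norm_smul, Real.norm_eq_abs, abs_of_nonneg (mul_nonneg (hp0 x₁) (hGpos s x₁).le), hB]
    have := hbound s hs1 hs2 x₁
    show p x₁ * G s x₁ * ‖x₁‖ ≤ C₂ * (Real.exp (-(C₁ / 2) * ‖x₁‖) * (1 + ‖x₁‖))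
    have h4 : 0 ≤ ‖x₁‖ := norm_nonneg x₁
    have h5 : 0 ≤ C₂ * Real.exp (-(C₁ / 2) * ‖x₁‖) := by positivity
    nlinarith [mul_nonneg (hp0 x₁) (hGpos s x₁).le,
      mul_le_mul_of_nonneg_right this h4]
  -- pointwise limits
  have hGlim : ∀ x₁, Tendsto (fun s => G s x₁) l (𝓝 1) := by
    intro x₁
    have hi : Tendsto (fun s => (inner ℝ (m s) x₁ : ℝ)) l (𝓝 (inner ℝ (x - x₀) x₁ : ℝ)) :=
      hmt.inner tendsto_const_nhds
    have h1 := hrt.mul hi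
    have h2 := hqt.mul (tendsto_const_nhds (x := ‖x₁‖ ^ 2) (f := l))
    rw [zero_mul] at h1 h2
    have h3 := h1.sub h2
    rw [sub_zero] at h3
    have := (Real.continuous_exp.tendsto 0).comp h3
    rw [Real.exp_zero] at this
    exact this
  have hlim1 : ∀ᵐ x₁ : EuclideanSpace ℝ (Fin d),
      Tendsto (fun s => p x₁ * G s x₁) l (𝓝 (p x₁)) := by
    refine Eventually.of_forall fun x₁ => ?_
    have := (tendsto_const_nhds (x := p x₁) (f := l)).mul (hGlim x₁)
    rwa [mul_one] at this
  have hlim2 : ∀ᵐ x₁ : EuclideanSpace ℝ (Fin d),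
      Tendsto (fun s => (p x₁ * G s x₁) • x₁) l (𝓝 (p x₁ • x₁)) := by
    refine Eventually.of_forall fun x₁ => ?_
    have := (tendsto_const_nhds (x := p x₁) (f := l)).mul (hGlim x₁)
    rw [mul_one] at this
    exact this.smul_const x₁
  -- DCT
  have hD : Tendsto (fun s => ∫ x₁, p x₁ * G s x₁) l (𝓝 1) := by
    have := tendsto_integral_filter_of_dominated_convergence B hmeas1 hbound1 hBint hlim1
    rwa [hpd] at this
  have hN : Tendsto (fun s => ∫ x₁, (p x₁ * G s x₁) • x₁) l
      (𝓝 (∫ x₁, p x₁ • x₁)) :=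
    tendsto_integral_filter_of_dominated_convergence B hmeas2 hbound2 hBint hlim2
  set μ : EuclideanSpace ℝ (Fin d) := ∫ x₁, p x₁ • x₁ with hμ
  have heta : Tendsto (fun s => eta1 p (α s) (β s) (σ s) s x x₀) l (𝓝 μ) := by
    have h := (hD.inv₀ one_ne_zero).smul hN
    rw [inv_one, one_smul] at h
    exact Tendsto.congr (fun s => (hkey s).symm) h
  have hvec : Tendsto (fun s => x - α s • x₀ - β s • eta1 p (α s) (β s) (σ s) s x x₀) l
      (𝓝 (x - x₀)) := by
    have h := (tendsto_const_nhds (x := x) (f := l)).sub (hαt.smul_const x₀) |>.sub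
      (hβt.smul heta)
    simpa using h
  constructor
  · have h := (hσt.inv₀ hσne).smul hvec
    exact h
  · have hα't : Tendsto α' l (𝓝 (α' 0)) := (hα'c 0 h01).mono_left hmono
    have hβ't : Tendsto β' l (𝓝 0) := by
      have h := (hβ'c 0 h01).mono_left hmono
      rwa [hβ'0] at h
    have hσ't : Tendsto σ' l (𝓝 (σ' 0)) := (hσ'c 0 h01).mono_left hmono
    have h := ((hα't.smul_const x₀).add (hβ't.smul heta)).add
      ((hσ't.div hσt hσne).smul hvec)
    rw [zero_smul, add_zero] at h
    simp only [drift]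
    exact h
end

section
/- Fix d ≥ 1, s ∈ (0,1), reals α_s, β_s > 0, σ_s > 0, and set M_s = β_s²/(s σ_s²) > 0 and m_s = β_s/(s σ_s²). Let p : ℝ^d → [0,∞) satisfy an exponential tail bound p(x₁) ≤ C₂ exp(−C₁|x₁|) with C₁, C₂ > 0 and ∫_{ℝ^d} p > 0. For v ∈ ℝ^d define Q(v) = ∫_{ℝ^d} p(x₁) e^{w(x₁,v)} dx₁, R(v) = ∫_{ℝ^d} x₁ p(x₁) e^{w(x₁,v)} dx₁, P(v) = ∫_{ℝ^d} x₁ x₁ᵀ p(x₁) e^{w(x₁,v)} dx₁ where w(x₁,v) = −½ M_s |x₁|² + m_s x₁·v. Then for every x₀ ∈ ℝ^d, the map x ↦ R(x−α_s x₀)/Q(x−α_s x₀) is differentiable on ℝ^d, and its Jacobian at x equals m_s (P(v) Q(v) − R(v) R(v)ᵀ)/Q(v)² with v = x − α_s x₀. -/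
set_option maxHeartbeats 1000000
set_option synthInstance.maxHeartbeats 1000000
open MeasureTheory
open scoped RealInnerProductSpace

lemma my_integrable_gauss (d : ℕ) {b : ℝ} (hb : 0 < b) :
    Integrable (fun v : EuclideanSpace ℝ (Fin d) => Real.exp (-b * ‖v‖ ^ 2)) := by
  have h := (GaussianFourier.integrable_cexp_neg_mul_sq_norm_add
      (V := EuclideanSpace ℝ (Fin d)) (b := (b : ℂ)) (by simpa using hb) 0 0).norm
  refine h.congr ?_
  filter_upwards with v
  rw [Complex.norm_exp]
  norm_num
  left
  norm_cast

lemma my_quad_bound {Ms : ℝ} (hM : 0 < Ms) (a t : ℝ) :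
    a * t - 1/2 * Ms * t ^ 2 ≤ a ^ 2 / Ms - Ms / 4 * t ^ 2 := by
  rw [← sub_nonneg]
  have h : a ^ 2 / Ms - Ms / 4 * t ^ 2 - (a * t - 1/2 * Ms * t ^ 2)
      = (a - Ms * t / 2) ^ 2 / Ms := by field_simp; ring
  rw [h]; positivity

lemma my_coord_le_norm {d : ℕ} (a : EuclideanSpace ℝ (Fin d)) (i : Fin d) : |a i| ≤ ‖a‖ := by
  rw [EuclideanSpace.norm_eq]
  rw [show |a i| = Real.sqrt (‖a i‖ ^ 2) by
    rw [Real.sqrt_sq (norm_nonneg _), Real.norm_eq_abs]]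
  apply Real.sqrt_le_sqrt
  exact Finset.single_le_sum (f := fun j => ‖a j‖ ^ 2) (fun j _ => by positivity)
    (Finset.mem_univ i)

lemma my_tilt_bound {d : ℕ} {Ms ms C₁ C₂ : ℝ} (hM : 0 < Ms) (hC₁ : 0 < C₁) (hC₂ : 0 < C₂)
    {p : EuclideanSpace ℝ (Fin d) → ℝ}
    (htail : ∀ x, p x ≤ C₂ * Real.exp (-C₁ * ‖x‖)) (hp0 : ∀ x, 0 ≤ p x) (k : ℕ) {c : ℝ}
    (hc : 0 ≤ c) {v : EuclideanSpace ℝ (Fin d)} (hv : ‖v‖ ≤ c) (a : EuclideanSpace ℝ (Fin d)) :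
    p a * Real.exp (-(1/2) * Ms * ‖a‖ ^ 2 + ms * ⟪a, v⟫) * ‖a‖ ^ k ≤
      C₂ * Real.exp (((k : ℝ) + |ms| * c) ^ 2 / Ms) * Real.exp (-(Ms/4) * ‖a‖ ^ 2) := by
  have ht : (0:ℝ) ≤ ‖a‖ := norm_nonneg a
  have hpa : p a ≤ C₂ := (htail a).trans <| by
    nth_rewrite 2 [← mul_one C₂]
    gcongr
    exact Real.exp_le_one_iff.mpr (by nlinarith)
  have h1 : ms * ⟪a, v⟫ ≤ |ms| * c * ‖a‖ := calc
    ms * ⟪a, v⟫ ≤ |ms * ⟪a, v⟫| := le_abs_self _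
    _ = |ms| * |⟪a, v⟫| := abs_mul _ _
    _ ≤ |ms| * (‖a‖ * ‖v‖) := by gcongr; exact abs_real_inner_le_norm a v
    _ ≤ |ms| * (‖a‖ * c) := by gcongr
    _ = |ms| * c * ‖a‖ := by ring
  have h2 : ‖a‖ ^ k ≤ Real.exp (k * ‖a‖) := by
    calc ‖a‖ ^ k ≤ (Real.exp ‖a‖) ^ k := by
          gcongr
          linarith [Real.add_one_le_exp ‖a‖]
      _ = Real.exp (k * ‖a‖) := by rw [← Real.exp_nat_mul]
  calc p a * Real.exp (-(1/2) * Ms * ‖a‖ ^ 2 + ms * ⟪a, v⟫) * ‖a‖ ^ k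
      ≤ C₂ * Real.exp (-(1/2) * Ms * ‖a‖ ^ 2 + |ms| * c * ‖a‖) * Real.exp (k * ‖a‖) := by
        refine mul_le_mul (mul_le_mul hpa (Real.exp_le_exp.2 (by linarith)) (Real.exp_pos _).le
          hC₂.le) h2 (pow_nonneg ht k) (by positivity)
    _ = C₂ * Real.exp (((k : ℝ) + |ms| * c) * ‖a‖ - 1/2 * Ms * ‖a‖ ^ 2) := by
        rw [mul_assoc, ← Real.exp_add]; ring_nf
    _ ≤ C₂ * Real.exp (((k : ℝ) + |ms| * c) ^ 2 / Ms - Ms / 4 * ‖a‖ ^ 2) := by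
        exact mul_le_mul_of_nonneg_left (Real.exp_le_exp.2 (my_quad_bound hM _ _)) hC₂.le
    _ = C₂ * Real.exp (((k : ℝ) + |ms| * c) ^ 2 / Ms) * Real.exp (-(Ms/4) * ‖a‖ ^ 2) := by
        rw [mul_assoc, ← Real.exp_add]; ring_nf

lemma my_hasFDerivAt_tilt {d : ℕ} (Ms ms : ℝ) (pa : ℝ) (a v : EuclideanSpace ℝ (Fin d)) :
    HasFDerivAt (fun v' : EuclideanSpace ℝ (Fin d) =>
        pa * Real.exp (-(1/2) * Ms * ‖a‖ ^ 2 + ms * ⟪a, v'⟫))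
      ((pa * Real.exp (-(1/2) * Ms * ‖a‖ ^ 2 + ms * ⟪a, v⟫) * ms) • innerSL ℝ a) v := by
  have h1 : HasFDerivAt (fun v' : EuclideanSpace ℝ (Fin d) =>
      -(1/2) * Ms * ‖a‖ ^ 2 + ms * ⟪a, v'⟫) (ms • innerSL ℝ a) v := by
    have h := ((innerSL ℝ a).hasFDerivAt (x := v)).const_mul ms
    exact h.const_add _
  have h2 := (h1.exp).const_mul pa
  have e : ((pa * Real.exp (-(1/2) * Ms * ‖a‖ ^ 2 + ms * ⟪a, v⟫) * ms) • innerSL ℝ a)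
      = pa • (Real.exp (-(1/2) * Ms * ‖a‖ ^ 2 + ms * ⟪a, v⟫) • (ms • innerSL ℝ a)) := by
    rw [smul_smul, smul_smul]
  rw [e]; exact h2

/-- Differentiability of the tilted conditional-mean map `x ↦ R(x−α_s x₀)/Q(x−α_s x₀)`
and the formula `m_s (P Q − R Rᵀ)/Q²` for its Jacobian, where `Q`, `R`, `P` are the exponentially
tilted mass, first-moment, and second-moment integrals of the density `p`. -/
theorem jacobian_of_tilted_mean
    (d : ℕ) (hd : 1 ≤ d) (s : ℝ) (hs : s ∈ Set.Ioo (0 : ℝ) 1)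
    (αs βs σs : ℝ) (hβ : 0 < βs) (hσ : 0 < σs)
    (Ms ms : ℝ) (hMs : Ms = βs ^ 2 / (s * σs ^ 2)) (hms : ms = βs / (s * σs ^ 2))
    (hMpos : 0 < Ms)
    (p : EuclideanSpace ℝ (Fin d) → ℝ) (hp0 : ∀ x₁, 0 ≤ p x₁)
    (C₁ C₂ : ℝ) (hC₁ : 0 < C₁) (hC₂ : 0 < C₂)
    (htail : ∀ x₁, p x₁ ≤ C₂ * Real.exp (-C₁ * ‖x₁‖))
    (hppos : 0 < ∫ x₁, p x₁)
    (w : EuclideanSpace ℝ (Fin d) → EuclideanSpace ℝ (Fin d) → ℝ)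
    (hw : w = fun x₁ v => -(1 / 2) * Ms * ‖x₁‖ ^ 2 + ms * ⟪x₁, v⟫)
    (Q : EuclideanSpace ℝ (Fin d) → ℝ)
    (hQ : Q = fun v => ∫ x₁, p x₁ * Real.exp (w x₁ v))
    (R : EuclideanSpace ℝ (Fin d) → EuclideanSpace ℝ (Fin d))
    (hR : R = fun v => ∫ x₁, (p x₁ * Real.exp (w x₁ v)) • x₁)
    (P : EuclideanSpace ℝ (Fin d) → Matrix (Fin d) (Fin d) ℝ)
    (hP : P = fun v => Matrix.of fun i j => ∫ x₁, p x₁ * Real.exp (w x₁ v) * (x₁ i * x₁ j)) :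
    ∀ x₀ x : EuclideanSpace ℝ (Fin d),
      HasFDerivAt (fun y => (Q (y - αs • x₀))⁻¹ • R (y - αs • x₀))
        (LinearMap.toContinuousLinearMap (Matrix.toEuclideanLin
          ((ms / Q (x - αs • x₀) ^ 2) •
            (Q (x - αs • x₀) • P (x - αs • x₀) -
              Matrix.of fun i j => R (x - αs • x₀) i * R (x - αs • x₀) j)))) x := by
  intro x₀ x
  set v₀ : EuclideanSpace ℝ (Fin d) := x - αs • x₀ with hv₀def
  -- basic rewrites
  have hwav : ∀ a v : EuclideanSpace ℝ (Fin d),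
      w a v = -(1/2) * Ms * ‖a‖ ^ 2 + ms * ⟪a, v⟫ := fun a v => by rw [hw]
  -- integrability of p
  have hpint : Integrable p := by
    by_contra h
    rw [integral_undef h] at hppos
    exact lt_irrefl 0 hppos
  have hpm : AEStronglyMeasurable p volume := hpint.aestronglyMeasurable
  have hcontw : ∀ v : EuclideanSpace ℝ (Fin d), Continuous fun a => Real.exp (w a v) := by
    intro v
    simp only [hw]
    exact Real.continuous_exp.comp ((continuous_const.mul (continuous_norm.pow 2)).add
      (continuous_const.mul (continuous_id.inner continuous_const)))
  have hWm : ∀ v : EuclideanSpace ℝ (Fin d),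
      AEStronglyMeasurable (fun a => p a * Real.exp (w a v)) volume :=
    fun v => hpm.mul (hcontw v).aestronglyMeasurable
  have hWnn : ∀ (v a : EuclideanSpace ℝ (Fin d)), 0 ≤ p a * Real.exp (w a v) :=
    fun v a => mul_nonneg (hp0 a) (Real.exp_pos _).le
  -- key bound
  have key : ∀ (c : ℝ), 0 ≤ c → ∀ v : EuclideanSpace ℝ (Fin d), ‖v‖ ≤ c → ∀ (k : ℕ)
      (a : EuclideanSpace ℝ (Fin d)),
      p a * Real.exp (w a v) * ‖a‖ ^ k ≤
        (C₂ * Real.exp (((k : ℝ) + |ms| * c) ^ 2 / Ms)) * Real.exp (-(Ms/4) * ‖a‖ ^ 2) := by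
    intro c hc v hv k a
    rw [hwav]
    exact my_tilt_bound hMpos hC₁ hC₂ htail hp0 k hc hv a
  -- master integrability
  have master : ∀ (c : ℝ), 0 ≤ c → ∀ v : EuclideanSpace ℝ (Fin d), ‖v‖ ≤ c → ∀ (k : ℕ) (r : ℝ)
      {G : Type} [NormedAddCommGroup G] (g : EuclideanSpace ℝ (Fin d) → G),
      AEStronglyMeasurable g volume →
      (∀ a, ‖g a‖ ≤ |r| * (p a * Real.exp (w a v) * ‖a‖ ^ k)) → Integrable g := by
    intro c hc v hv k r G _ g hm hb
    refine Integrable.mono' (((my_integrable_gauss d (by positivity : (0:ℝ) < Ms/4)).const_mul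
      (C₂ * Real.exp (((k : ℝ) + |ms| * c) ^ 2 / Ms))).const_mul |r|) hm ?_
    filter_upwards with a
    refine (hb a).trans ?_
    calc |r| * (p a * Real.exp (w a v) * ‖a‖ ^ k)
        ≤ |r| * ((C₂ * Real.exp (((k : ℝ) + |ms| * c) ^ 2 / Ms)) * Real.exp (-(Ms/4) * ‖a‖ ^ 2)) :=
          mul_le_mul_of_nonneg_left (key c hc v hv k a) (abs_nonneg r)
      _ = |r| * ((C₂ * Real.exp (((k : ℝ) + |ms| * c) ^ 2 / Ms)) * Real.exp (-(Ms/4) * ‖a‖ ^ 2)) :=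
          rfl
  -- integrabilities
  have contcoord : ∀ i : Fin d, Continuous fun a : EuclideanSpace ℝ (Fin d) => a i :=
    fun i => (EuclideanSpace.proj (𝕜 := ℝ) i).continuous
  have iW : ∀ v : EuclideanSpace ℝ (Fin d),
      Integrable (fun a => p a * Real.exp (w a v)) := by
    intro v
    refine master ‖v‖ (norm_nonneg v) v le_rfl 0 1 _ (hWm v) fun a => ?_
    rw [Real.norm_eq_abs, abs_of_nonneg (hWnn v a)]
    simp
  have iR : ∀ v : EuclideanSpace ℝ (Fin d),
      Integrable (fun a => (p a * Real.exp (w a v)) • a) := by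
    intro v
    refine master ‖v‖ (norm_nonneg v) v le_rfl 1 1 _
      ((hWm v).smul aestronglyMeasurable_id) fun a => ?_
    rw [norm_smul, Real.norm_eq_abs, abs_of_nonneg (hWnn v a)]
    simp
  have iP : ∀ (v : EuclideanSpace ℝ (Fin d)) (i j : Fin d),
      Integrable (fun a => p a * Real.exp (w a v) * (a i * a j)) := by
    intro v i j
    refine master ‖v‖ (norm_nonneg v) v le_rfl 2 1 _
      ((hWm v).mul ((contcoord i).mul (contcoord j)).aestronglyMeasurable) fun a => ?_
    rw [Real.norm_eq_abs, abs_mul, abs_of_nonneg (hWnn v a), abs_mul]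
    calc p a * Real.exp (w a v) * (|a i| * |a j|)
        ≤ p a * Real.exp (w a v) * (‖a‖ * ‖a‖) :=
          mul_le_mul_of_nonneg_left (mul_le_mul (my_coord_le_norm a i) (my_coord_le_norm a j)
            (abs_nonneg _) (norm_nonneg _)) (hWnn v a)
      _ = |1| * (p a * Real.exp (w a v) * ‖a‖ ^ 2) := by rw [abs_one, one_mul]; ring
  -- operator-valued integrabilities at v₀
  have iFQ : Integrable (fun a : EuclideanSpace ℝ (Fin d) =>
      (p a * Real.exp (w a v₀) * ms) • innerSL ℝ a) := by
    refine master ‖v₀‖ (norm_nonneg v₀) v₀ le_rfl 1 ms _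
      (((hWm v₀).mul_const ms).smul ((innerSL ℝ).continuous.aestronglyMeasurable)) fun a => ?_
    rw [norm_smul (p a * Real.exp (w a v₀) * ms) ((innerSL ℝ) a), Real.norm_eq_abs, abs_mul,
      abs_of_nonneg (hWnn v₀ a), innerSL_apply_norm]
    rw [pow_one]; ring_nf; rfl
  have iFR : Integrable (fun a : EuclideanSpace ℝ (Fin d) =>
      (p a * Real.exp (w a v₀) * ms) • ((innerSL ℝ a).smulRight a)) := by
    have hcont : Continuous fun a : EuclideanSpace ℝ (Fin d) => (innerSL ℝ a).smulRight a := by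
      exact (Continuous.clm_apply (((ContinuousLinearMap.smulRightL ℝ
        (EuclideanSpace ℝ (Fin d)) (EuclideanSpace ℝ (Fin d))).continuous).comp
        (innerSL ℝ).continuous) continuous_id)
    refine master ‖v₀‖ (norm_nonneg v₀) v₀ le_rfl 2 ms _
      (((hWm v₀).mul_const ms).smul hcont.aestronglyMeasurable) fun a => ?_
    rw [norm_smul (p a * Real.exp (w a v₀) * ms) (((innerSL ℝ) a).smulRight a), Real.norm_eq_abs,
      abs_mul, abs_of_nonneg (hWnn v₀ a),
      ContinuousLinearMap.norm_smulRight_apply, innerSL_apply_norm]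
    calc p a * Real.exp (w a v₀) * |ms| * (‖a‖ * ‖a‖)
        = |ms| * (p a * Real.exp (w a v₀) * ‖a‖ ^ 2) := by ring
      _ ≤ |ms| * (p a * Real.exp (w a v₀) * ‖a‖ ^ 2) := le_rfl
  have iFRu : ∀ u : EuclideanSpace ℝ (Fin d), Integrable (fun a : EuclideanSpace ℝ (Fin d) =>
      (p a * Real.exp (w a v₀) * ms * ⟪a, u⟫) • a) := by
    intro u
    refine master ‖v₀‖ (norm_nonneg v₀) v₀ le_rfl 2 (ms * ‖u‖) _
      ((((hWm v₀).mul_const ms).mul ((continuous_id.inner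
        continuous_const).aestronglyMeasurable)).smul aestronglyMeasurable_id) fun a => ?_
    rw [norm_smul, Real.norm_eq_abs, abs_mul, abs_mul, abs_of_nonneg (hWnn v₀ a)]
    calc p a * Real.exp (w a v₀) * |ms| * |⟪a, u⟫| * ‖a‖
        ≤ p a * Real.exp (w a v₀) * |ms| * (‖a‖ * ‖u‖) * ‖a‖ :=
          mul_le_mul_of_nonneg_right (mul_le_mul_of_nonneg_left (abs_real_inner_le_norm a u)
            (mul_nonneg (hWnn v₀ a) (abs_nonneg ms))) (norm_nonneg a)
      _ = |ms * ‖u‖| * (p a * Real.exp (w a v₀) * ‖a‖ ^ 2) := by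
          rw [abs_mul, abs_norm]; ring
  -- positivity of Q
  have hQv : ∀ v, Q v = ∫ a, p a * Real.exp (w a v) := fun v => by rw [hQ]
  have hQpos : ∀ v, 0 < Q v := by
    intro v
    rw [hQv v, integral_pos_iff_support_of_nonneg (fun a => hWnn v a) (iW v)]
    have hsupp : (Function.support fun a => p a * Real.exp (w a v)) = Function.support p := by
      ext a
      simp [Function.mem_support, Real.exp_ne_zero]
    rw [hsupp]
    exact (integral_pos_iff_support_of_nonneg hp0 hpint).mp hppos
  -- derivative of Q
  have hball : ∀ v ∈ Metric.ball v₀ 1, ‖v‖ ≤ ‖v₀‖ + 1 := by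
    intro v hv
    have h1 : ‖v - v₀‖ < 1 := by rwa [Metric.mem_ball, dist_eq_norm] at hv
    calc ‖v‖ = ‖v₀ + (v - v₀)‖ := by congr 1; abel
      _ ≤ ‖v₀‖ + ‖v - v₀‖ := norm_add_le _ _
      _ ≤ ‖v₀‖ + 1 := by linarith
  have hc0 : (0:ℝ) ≤ ‖v₀‖ + 1 := by positivity
  have hDQ : HasFDerivAt Q (∫ a, (p a * Real.exp (w a v₀) * ms) • innerSL ℝ a) v₀ := by
    rw [hQ]
    refine hasFDerivAt_integral_of_dominated_of_fderiv_le
      (F' := fun v a => (p a * Real.exp (w a v) * ms) • innerSL ℝ a)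
      (bound := fun a => |ms| * ((C₂ * Real.exp (((1:ℝ) + |ms| * (‖v₀‖ + 1)) ^ 2 / Ms))
        * Real.exp (-(Ms/4) * ‖a‖ ^ 2)))
      (Metric.ball_mem_nhds v₀ one_pos) (Filter.Eventually.of_forall fun v => hWm v) (iW v₀) iFQ.aestronglyMeasurable
      (Filter.Eventually.of_forall fun a v hv => ?_)
      ((((my_integrable_gauss d (by positivity : (0:ℝ) < Ms/4)).const_mul _).const_mul _))
      (Filter.Eventually.of_forall fun a v hv => ?_)
    · rw [norm_smul (p a * Real.exp (w a v) * ms) ((innerSL ℝ) a), Real.norm_eq_abs, abs_mul,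
        abs_of_nonneg (hWnn v a), innerSL_apply_norm]
      calc p a * Real.exp (w a v) * |ms| * ‖a‖
          = |ms| * (p a * Real.exp (w a v) * ‖a‖ ^ 1) := by ring
        _ ≤ |ms| * ((C₂ * Real.exp (((1:ℝ) + |ms| * (‖v₀‖ + 1)) ^ 2 / Ms))
            * Real.exp (-(Ms/4) * ‖a‖ ^ 2)) := by
            refine mul_le_mul_of_nonneg_left ?_ (abs_nonneg ms)
            have := key (‖v₀‖ + 1) hc0 v (hball v hv) 1 a
            simpa using this
    · have h := my_hasFDerivAt_tilt (d := d) Ms ms (p a) a v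
      simp only [hwav]
      exact h
  have hDR : HasFDerivAt R (∫ a, (p a * Real.exp (w a v₀) * ms) •
      ((innerSL ℝ a).smulRight a)) v₀ := by
    rw [hR]
    refine hasFDerivAt_integral_of_dominated_of_fderiv_le
      (F' := fun v a => (p a * Real.exp (w a v) * ms) • ((innerSL ℝ a).smulRight a))
      (bound := fun a => |ms| * ((C₂ * Real.exp (((2:ℝ) + |ms| * (‖v₀‖ + 1)) ^ 2 / Ms))
        * Real.exp (-(Ms/4) * ‖a‖ ^ 2)))
      (Metric.ball_mem_nhds v₀ one_pos) (Filter.Eventually.of_forall fun v => (hWm v).smul aestronglyMeasurable_id)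
      (iR v₀) iFR.aestronglyMeasurable
      (Filter.Eventually.of_forall fun a v hv => ?_)
      ((((my_integrable_gauss d (by positivity : (0:ℝ) < Ms/4)).const_mul _).const_mul _))
      (Filter.Eventually.of_forall fun a v hv => ?_)
    · rw [norm_smul (p a * Real.exp (w a v) * ms) (((innerSL ℝ) a).smulRight a), Real.norm_eq_abs,
        abs_mul, abs_of_nonneg (hWnn v a),
        ContinuousLinearMap.norm_smulRight_apply, innerSL_apply_norm]
      calc p a * Real.exp (w a v) * |ms| * (‖a‖ * ‖a‖)
          = |ms| * (p a * Real.exp (w a v) * ‖a‖ ^ 2) := by ring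
        _ ≤ |ms| * ((C₂ * Real.exp (((2:ℝ) + |ms| * (‖v₀‖ + 1)) ^ 2 / Ms))
            * Real.exp (-(Ms/4) * ‖a‖ ^ 2)) := by
            refine mul_le_mul_of_nonneg_left ?_ (abs_nonneg ms)
            have := key (‖v₀‖ + 1) hc0 v (hball v hv) 2 a
            simpa using this
    · have h := (my_hasFDerivAt_tilt (d := d) Ms ms (p a) a v).smul_const a
      simp only [hwav]
      have e : (((p a * Real.exp (-(1/2) * Ms * ‖a‖ ^ 2 + ms * ⟪a, v⟫) * ms) •
          innerSL ℝ a).smulRight a) = (p a * Real.exp (-(1/2) * Ms * ‖a‖ ^ 2 + ms * ⟪a, v⟫) * ms) •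
          ((innerSL ℝ a).smulRight a) := by
        ext u
        simp only [ContinuousLinearMap.smulRight_apply, ContinuousLinearMap.coe_smul',
          Pi.smul_apply, smul_smul, smul_eq_mul]
      rw [e] at h
      exact h
  -- assembly
  set LQ := ∫ a, (p a * Real.exp (w a v₀) * ms) • innerSL ℝ a with hLQ
  set LR := ∫ a, (p a * Real.exp (w a v₀) * ms) • ((innerSL ℝ a).smulRight a) with hLR
  have hQne : Q v₀ ≠ 0 := (hQpos v₀).ne'
  have hinv : HasFDerivAt (fun v => (Q v)⁻¹) ((-(Q v₀ ^ 2)⁻¹) • LQ) v₀ :=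
    (hasDerivAt_inv hQne).comp_hasFDerivAt v₀ hDQ
  have hD := hinv.smul hDR
  have haff : HasFDerivAt (fun y : EuclideanSpace ℝ (Fin d) => y - αs • x₀)
      (ContinuousLinearMap.id ℝ (EuclideanSpace ℝ (Fin d))) x := (hasFDerivAt_id x).sub_const _
  have hfinal := hD.comp x haff
  rw [ContinuousLinearMap.comp_id] at hfinal
  refine hfinal.congr_fderiv ?_
  -- identify the derivative
  have hinner : ∀ (a u : EuclideanSpace ℝ (Fin d)), ⟪a, u⟫ = ∑ j, a j * u j := by
    intro a u
    simp [PiLp.inner_apply, RCLike.inner_apply, conj_trivial]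
    exact Finset.sum_congr rfl fun _ _ => mul_comm _ _
  have hRv : ∀ v, R v = ∫ a, (p a * Real.exp (w a v)) • a := fun v => by rw [hR]
  have e2 : ∀ u : EuclideanSpace ℝ (Fin d),
      ⟪R v₀, u⟫ = ∫ a, (p a * Real.exp (w a v₀)) * ⟪a, u⟫ := by
    intro u
    rw [real_inner_comm, hRv v₀, ← integral_inner (iR v₀)]
    congr 1
    funext a
    rw [real_inner_smul_right, real_inner_comm]
  have e1 : ∀ u : EuclideanSpace ℝ (Fin d),
      LQ u = ms * ∫ a, (p a * Real.exp (w a v₀)) * ⟪a, u⟫ := by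
    intro u
    rw [hLQ, ContinuousLinearMap.integral_apply iFQ, ← integral_const_mul]
    congr 1; funext a
    simp only [ContinuousLinearMap.coe_smul', Pi.smul_apply, innerSL_apply_apply, smul_eq_mul]
    ring
  have e3 : ∀ i, R v₀ i = ∫ a, (p a * Real.exp (w a v₀)) * a i := by
    intro i
    rw [hRv v₀]
    rw [show (∫ a, (p a * Real.exp (w a v₀)) • a) i
        = EuclideanSpace.proj i (∫ a, (p a * Real.exp (w a v₀)) • a) from rfl,
      ← ContinuousLinearMap.integral_comp_comm _ (iR v₀)]
    exact integral_congr_ae (Filter.Eventually.of_forall fun a => rfl)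
  have e4 : ∀ (u : EuclideanSpace ℝ (Fin d)) (i : Fin d),
      LR u i = ms * ∫ a, (p a * Real.exp (w a v₀)) * (⟪a, u⟫ * a i) := by
    intro u i
    rw [hLR, ContinuousLinearMap.integral_apply iFR]
    have hfun : (fun a => ((p a * Real.exp (w a v₀) * ms) • ((innerSL ℝ a).smulRight a)) u)
        = fun a => (p a * Real.exp (w a v₀) * ms * ⟪a, u⟫) • a := by
      funext a
      simp only [ContinuousLinearMap.coe_smul', Pi.smul_apply,
        ContinuousLinearMap.smulRight_apply, innerSL_apply_apply, smul_smul, smul_eq_mul]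
    rw [hfun]
    rw [show (∫ a, (p a * Real.exp (w a v₀) * ms * ⟪a, u⟫) • a) i
        = EuclideanSpace.proj i (∫ a, (p a * Real.exp (w a v₀) * ms * ⟪a, u⟫) • a) from rfl,
      ← ContinuousLinearMap.integral_comp_comm _ (iFRu u), ← integral_const_mul]
    refine integral_congr_ae (Filter.Eventually.of_forall fun a => ?_)
    show (p a * Real.exp (w a v₀) * ms * ⟪a, u⟫) * a i
      = ms * ((p a * Real.exp (w a v₀)) * (⟪a, u⟫ * a i))
    ring
  have e5 : ∀ (u : EuclideanSpace ℝ (Fin d)) (i : Fin d),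
      (∑ j, P v₀ i j * u j) = ∫ a, (p a * Real.exp (w a v₀)) * (⟪a, u⟫ * a i) := by
    intro u i
    have hPv : ∀ i j : Fin d, P v₀ i j = ∫ a, p a * Real.exp (w a v₀) * (a i * a j) :=
      fun i j => by rw [hP]; rfl
    calc (∑ j, P v₀ i j * u j)
        = ∑ j, ∫ a, p a * Real.exp (w a v₀) * (a i * a j) * u j := by
          refine Finset.sum_congr rfl fun j _ => ?_
          rw [hPv i j, ← integral_mul_const]
      _ = ∫ a, ∑ j, p a * Real.exp (w a v₀) * (a i * a j) * u j :=
          (integral_finset_sum _ fun j _ => (iP v₀ i j).mul_const (u j)).symm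
      _ = ∫ a, (p a * Real.exp (w a v₀)) * (⟪a, u⟫ * a i) := by
          congr 1; funext a
          calc ∑ j, p a * Real.exp (w a v₀) * (a i * a j) * u j
              = ∑ j, (p a * Real.exp (w a v₀) * a i) * (a j * u j) :=
                Finset.sum_congr rfl fun j _ => by ring
            _ = (p a * Real.exp (w a v₀) * a i) * ∑ j, a j * u j := by
                rw [← Finset.mul_sum]
            _ = (p a * Real.exp (w a v₀)) * (⟪a, u⟫ * a i) := by rw [hinner a u]; ring
  -- final linear-map equality
  refine ContinuousLinearMap.ext fun u => ?_
  refine PiLp.ext fun i => ?_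
  simp only [ContinuousLinearMap.add_apply, ContinuousLinearMap.coe_smul', Pi.smul_apply,
    ContinuousLinearMap.smulRight_apply, LinearMap.coe_toContinuousLinearMap',
    Matrix.toEuclideanLin_apply, PiLp.add_apply, PiLp.smul_apply, smul_eq_mul,
    Matrix.ofLp_toEuclideanLin_apply, WithLp.ofLp_toLp, Matrix.mulVec, dotProduct,
    Matrix.smul_apply, Matrix.sub_apply, Matrix.of_apply]
  calc (Q v₀)⁻¹ * LR u i + -(Q v₀ ^ 2)⁻¹ * LQ u * R v₀ i
      = ms / Q v₀ ^ 2 * (Q v₀ * (∑ j, P v₀ i j * u j) - R v₀ i * (∑ j, R v₀ j * u j)) := by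
        rw [e4 u i, e1 u, e5 u i, show (∑ j, R v₀ j * u j) = ⟪R v₀, u⟫ from (hinner _ u).symm,
          e2 u]
        field_simp
        ring
    _ = ∑ j, ms / Q v₀ ^ 2 * (Q v₀ * P v₀ i j - R v₀ i * R v₀ j) * u j := by
        have hterm : ∀ j ∈ Finset.univ, ms / Q v₀ ^ 2 * (Q v₀ * P v₀ i j - R v₀ i * R v₀ j) * u j
            = (ms / Q v₀ ^ 2 * Q v₀) * (P v₀ i j * u j)
              - (ms / Q v₀ ^ 2 * R v₀ i) * (R v₀ j * u j) := fun j _ => by ring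
        rw [Finset.sum_congr rfl hterm, Finset.sum_sub_distrib, ← Finset.mul_sum, ← Finset.mul_sum]
        ring
end

section
/- Fix d ≥ 1, s ∈ (0,1), reals α_s, β_s > 0, σ_s > 0, and x₀ ∈ ℝ^d. Let p : ℝ^d → [0,∞) be a probability density satisfying an exponential tail bound p(x₁) ≤ C₂ exp(−C₁|x₁|) with C₁, C₂ > 0, and assume p is not a.e. zero. Define ρ_s(x|x₀) = (2π s σ_s²)^{−d/2} ∫_{ℝ^d} p(x₁) exp(−|x−α_s x₀−β_s x₁|²/(2 s σ_s²)) dx₁. Then ρ_s(·|x₀) is strictly positive and differentiable on ℝ^d, and its score satisfies ∇_x log ρ_s(x|x₀) = −(x − α_s x₀ − β_s η₁(s,x,x₀))/(s σ_s²) for all x ∈ ℝ^d. -/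
open MeasureTheory

/-- The density `ρ_s(x|x₀)` of the stochastic interpolant `x_s = α_s x₀ + β_s x₁ + √s σ_s z`
with `x₁ ∼ p` and `z` standard Gaussian. -/
noncomputable def interpDensity {d : ℕ} (p : EuclideanSpace ℝ (Fin d) → ℝ) (αs βs σs s : ℝ)
    (x x₀ : EuclideanSpace ℝ (Fin d)) : ℝ :=
  (2 * Real.pi * s * σs ^ 2) ^ (-(d : ℝ) / 2) *
    ∫ x₁, p x₁ * Real.exp (-‖x - αs • x₀ - βs • x₁‖ ^ 2 / (2 * s * σs ^ 2))

set_option maxHeartbeats 1600000 in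
set_option synthInstance.maxHeartbeats 400000 in
/-- The interpolant density `ρ_s(·|x₀)` is strictly positive and differentiable,
and its score is `∇_x log ρ_s(x|x₀) = −(x − α_s x₀ − β_s η₁(s,x,x₀))/(s σ_s²)`. -/
theorem score_of_interp_density
    (d : ℕ) (hd : 1 ≤ d) (s : ℝ) (hs : s ∈ Set.Ioo (0 : ℝ) 1)
    (αs βs σs : ℝ) (hβ : 0 < βs) (hσ : 0 < σs)
    (x₀ : EuclideanSpace ℝ (Fin d))
    (p : EuclideanSpace ℝ (Fin d) → ℝ) (hp0 : ∀ x₁, 0 ≤ p x₁)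
    (hpd : ∫ x₁, p x₁ = 1)
    (C₁ C₂ : ℝ) (hC₁ : 0 < C₁) (hC₂ : 0 < C₂)
    (htail : ∀ x₁, p x₁ ≤ C₂ * Real.exp (-C₁ * ‖x₁‖))
    (hpne : ¬ (∀ᵐ x₁, p x₁ = 0)) :
    (∀ x, 0 < interpDensity p αs βs σs s x x₀) ∧
    Differentiable ℝ (fun x => interpDensity p αs βs σs s x x₀) ∧
    (∀ x, gradient (fun y => Real.log (interpDensity p αs βs σs s y x₀)) x
      = (-(1 / (s * σs ^ 2))) • (x - αs • x₀ - βs • eta1 p αs βs σs s x x₀)) := by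
  obtain ⟨hs0, hs1⟩ := hs
  have hc : (0:ℝ) < s * σs ^ 2 := by positivity
  set e : EuclideanSpace ℝ (Fin d) → EuclideanSpace ℝ (Fin d) → ℝ :=
    fun x a => Real.exp (-‖x - αs • x₀ - βs • a‖ ^ 2 / (2 * s * σs ^ 2)) with hedef
  set F : EuclideanSpace ℝ (Fin d) → ℝ := fun x => ∫ a, p a * e x a with hFdef
  have hK : (0:ℝ) < (2 * Real.pi * s * σs ^ 2) ^ (-(d : ℝ) / 2) :=
    Real.rpow_pos_of_pos (by positivity) _
  set K : ℝ := (2 * Real.pi * s * σs ^ 2) ^ (-(d : ℝ) / 2) with hKdef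
  have hID : ∀ x, interpDensity p αs βs σs s x x₀ = K * F x := fun x => rfl
  have hp_int : Integrable p := by
    by_contra h
    rw [integral_undef h] at hpd; exact one_ne_zero hpd.symm
  have hpm := hp_int.aestronglyMeasurable
  have he_cont : ∀ x, Continuous fun a : EuclideanSpace ℝ (Fin d) => e x a := by
    intro x
    apply Real.continuous_exp.comp
    fun_prop
  have he_le : ∀ x a, e x a ≤ 1 := by
    intro x a
    rw [hedef, Real.exp_le_one_iff]
    apply div_nonpos_of_nonpos_of_nonneg
    · simp [sq_nonneg]
    · positivity
  have he_pos : ∀ x a, 0 < e x a := fun x a => Real.exp_pos _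
  have hI1 : ∀ x, Integrable (fun a => p a * e x a) := by
    intro x
    refine hp_int.mono (hpm.mul (he_cont x).aestronglyMeasurable) (ae_of_all _ fun a => ?_)
    rw [Real.norm_eq_abs, Real.norm_eq_abs, abs_of_nonneg (mul_nonneg (hp0 a) (he_pos x a).le),
      abs_of_nonneg (hp0 a)]
    calc p a * e x a ≤ p a * 1 := mul_le_mul_of_nonneg_left (he_le x a) (hp0 a)
      _ = p a := mul_one _
  have hsupp : 0 < volume (Function.support p) := by
    rw [pos_iff_ne_zero]
    intro h0
    exact hpne (by rw [ae_iff]; simpa [Function.support] using h0)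
  have hFpos : ∀ x, 0 < F x := by
    intro x
    refine (integral_pos_iff_support_of_nonneg
      (fun a => mul_nonneg (hp0 a) (he_pos x a).le) (hI1 x)).mpr ?_
    have hss : Function.support (fun a => p a * e x a) = Function.support p := by
      ext a
      simp [Function.support, (he_pos x a).ne']
    rw [hss]; exact hsupp
  -- tail integrability
  have aux : ∀ t : ℝ, 0 ≤ t →
      (1 + t) ^ (d + 2) * Real.exp (-C₁ * t) ≤ (1 + ((d : ℝ) + 2) / C₁) ^ (d + 2) := by
    intro t ht
    have hn : (0:ℝ) < (d:ℝ) + 2 := by positivity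
    have h2 : 1 + C₁ * t / ((d:ℝ) + 2) ≤ Real.exp (C₁ * t / ((d:ℝ) + 2)) := by
      have := Real.add_one_le_exp (C₁ * t / ((d:ℝ) + 2)); linarith
    have h1 : 1 + t ≤ (1 + ((d:ℝ) + 2) / C₁) * Real.exp (C₁ * t / ((d:ℝ)+2)) := by
      have h3 : 1 + t ≤ (1 + ((d:ℝ) + 2) / C₁) * (1 + C₁ * t / ((d:ℝ) + 2)) := by
        have hexp : (1 + ((d:ℝ) + 2) / C₁) * (1 + C₁ * t / ((d:ℝ) + 2))
            = 1 + C₁ * t / ((d:ℝ)+2) + ((d:ℝ)+2)/C₁ + t := by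
          field_simp
          ring
        rw [hexp]
        have h5 : 0 ≤ C₁ * t / ((d:ℝ)+2) := by positivity
        have h6 : 0 ≤ ((d:ℝ)+2)/C₁ := by positivity
        linarith
      refine h3.trans ?_
      exact mul_le_mul_of_nonneg_left h2 (by positivity)
    have h4 : (1 + t) ^ (d+2) ≤ ((1 + ((d:ℝ) + 2)/C₁) * Real.exp (C₁ * t / ((d:ℝ)+2))) ^ (d+2) :=
      pow_le_pow_left₀ (by linarith) h1 _
    have h5 : ((1 + ((d:ℝ) + 2)/C₁) * Real.exp (C₁ * t / ((d:ℝ)+2))) ^ (d+2)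
        = (1 + ((d:ℝ)+2)/C₁) ^ (d+2) * Real.exp (C₁ * t) := by
      rw [mul_pow, ← Real.exp_nat_mul]
      congr 1
      congr 1
      push_cast
      field_simp
    rw [h5] at h4
    calc (1 + t) ^ (d + 2) * Real.exp (-C₁ * t)
        ≤ (1 + ((d:ℝ)+2)/C₁) ^ (d+2) * Real.exp (C₁ * t) * Real.exp (-C₁ * t) :=
          mul_le_mul_of_nonneg_right h4 (Real.exp_pos _).le
      _ = (1 + ((d:ℝ)+2)/C₁) ^ (d+2) := by
          rw [mul_assoc, ← Real.exp_add]
          simp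
  have hKd : ∀ t : ℝ, 0 ≤ t → t * Real.exp (-C₁ * t) ≤
      ((1 + ((d:ℝ) + 2) / C₁) ^ (d + 2)) * (1 + t) ^ (-((d:ℝ) + 1)) := by
    intro t ht
    have h1t : (0:ℝ) < 1 + t := by linarith
    rw [Real.rpow_neg h1t.le, show ((d:ℝ) + 1) = ((d + 1 : ℕ) : ℝ) by push_cast; ring,
      Real.rpow_natCast, ← div_eq_mul_inv, le_div_iff₀ (by positivity)]
    calc t * Real.exp (-C₁ * t) * (1 + t) ^ (d + 1)
        = t * (1 + t) ^ (d + 1) * Real.exp (-C₁ * t) := by ring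
      _ ≤ (1 + t) ^ (d + 2) * Real.exp (-C₁ * t) := by
          apply mul_le_mul_of_nonneg_right _ (Real.exp_pos _).le
          have hpp : (1 + t) ^ (d + 2) = (1 + t) * (1 + t) ^ (d + 1) := by ring
          rw [hpp]
          exact mul_le_mul_of_nonneg_right (by linarith) (by positivity)
      _ ≤ (1 + ((d:ℝ) + 2) / C₁) ^ (d + 2) := aux t ht
  have hrd : (Module.finrank ℝ (EuclideanSpace ℝ (Fin d)) : ℝ) < (d:ℝ) + 1 := by
    simp [finrank_euclideanSpace]
  have hint_r : Integrable (fun a : EuclideanSpace ℝ (Fin d) => (1 + ‖a‖) ^ (-((d:ℝ) + 1))) :=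
    integrable_one_add_norm hrd
  have hI2 : ∀ x, Integrable (fun a => (p a * e x a) • a) := by
    intro x
    refine Integrable.mono' (hint_r.const_mul (C₂ * ((1 + ((d:ℝ) + 2) / C₁) ^ (d + 2))))
      ((hpm.mul (he_cont x).aestronglyMeasurable).smul aestronglyMeasurable_id)
      (ae_of_all _ fun a => ?_)
    rw [norm_smul, Real.norm_eq_abs, abs_of_nonneg (mul_nonneg (hp0 a) (he_pos x a).le)]
    calc p a * e x a * ‖a‖ ≤ (C₂ * Real.exp (-C₁ * ‖a‖)) * ‖a‖ := by
          apply mul_le_mul_of_nonneg_right _ (norm_nonneg a)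
          calc p a * e x a ≤ p a * 1 := mul_le_mul_of_nonneg_left (he_le x a) (hp0 a)
            _ = p a := mul_one _
            _ ≤ C₂ * Real.exp (-C₁ * ‖a‖) := htail a
      _ = C₂ * (‖a‖ * Real.exp (-C₁ * ‖a‖)) := by ring
      _ ≤ C₂ * (((1 + ((d:ℝ) + 2) / C₁) ^ (d + 2)) * (1 + ‖a‖) ^ (-((d:ℝ) + 1))) :=
          mul_le_mul_of_nonneg_left (hKd ‖a‖ (norm_nonneg a)) hC₂.le
      _ = C₂ * ((1 + ((d:ℝ) + 2) / C₁) ^ (d + 2)) * (1 + ‖a‖) ^ (-((d:ℝ) + 1)) := by ring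
  -- uniform bound for t e^{-t²/(2sσ²)}
  have texp : ∀ t : ℝ, 0 ≤ t →
      t * Real.exp (-t ^ 2 / (2 * s * σs ^ 2)) ≤ max 1 (2 * (s * σs ^ 2)) := by
    intro t ht
    set c := s * σs ^ 2 with hcdef
    rw [show (2 : ℝ) * s * σs ^ 2 = 2 * c by rw [hcdef]; ring]
    have hexple : Real.exp (-t ^ 2 / (2 * c)) ≤ 1 := by
      rw [Real.exp_le_one_iff]
      exact div_nonpos_of_nonpos_of_nonneg (by simp [sq_nonneg]) (by positivity)
    rcases le_or_gt t 1 with h | h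
    · calc t * Real.exp (-t ^ 2 / (2 * c)) ≤ t * 1 := mul_le_mul_of_nonneg_left hexple ht
        _ ≤ 1 := by linarith
        _ ≤ max 1 (2 * c) := le_max_left _ _
    · have h1 : t ^ 2 / (2 * c) ≤ Real.exp (t ^ 2 / (2 * c)) := by
        have := Real.add_one_le_exp (t ^ 2 / (2 * c)); linarith
      have h2 : Real.exp (-t ^ 2 / (2 * c)) ≤ 2 * c / t ^ 2 := by
        rw [neg_div, Real.exp_neg, inv_le_comm₀ (Real.exp_pos _) (by positivity)]
        calc (2 * c / t ^ 2)⁻¹ = t ^ 2 / (2 * c) := by rw [inv_div]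
          _ ≤ Real.exp (t ^ 2 / (2 * c)) := h1
      calc t * Real.exp (-t ^ 2 / (2 * c)) ≤ t * (2 * c / t ^ 2) :=
          mul_le_mul_of_nonneg_left h2 ht
        _ = 2 * c / t := by field_simp
        _ ≤ 2 * c := by
            rw [div_le_iff₀ (by linarith)]
            nlinarith
        _ ≤ max 1 (2 * c) := le_max_right _ _
  -- the derivative of F
  set G : EuclideanSpace ℝ (Fin d) → EuclideanSpace ℝ (Fin d) := fun x =>
    ∫ a, (p a * e x a * (-(1 / (s * σs ^ 2)))) • (x - αs • x₀ - βs • a) with hGdef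
  set F' : EuclideanSpace ℝ (Fin d) → EuclideanSpace ℝ (Fin d) →
      (EuclideanSpace ℝ (Fin d) →L[ℝ] ℝ) := fun y a =>
    (p a * e y a * (-(1 / (s * σs ^ 2)))) • (innerSL ℝ (y - αs • x₀ - βs • a)) with hF'def
  have hscal : ∀ y a : EuclideanSpace ℝ (Fin d),
      |p a * e y a * (-(1 / (s * σs ^ 2)))| * ‖y - αs • x₀ - βs • a‖
        ≤ p a * (max 1 (2 * (s * σs ^ 2)) / (s * σs ^ 2)) := by
    intro y a
    simp only [hedef]
    rw [abs_mul, abs_of_nonneg (mul_nonneg (hp0 a) (he_pos y a).le), abs_neg,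
      abs_of_nonneg (by positivity : (0:ℝ) ≤ 1 / (s * σs ^ 2))]
    have hb := texp ‖y - αs • x₀ - βs • a‖ (norm_nonneg _)
    calc p a * e y a * (1 / (s * σs ^ 2)) * ‖y - αs • x₀ - βs • a‖
        = p a * (‖y - αs • x₀ - βs • a‖ * e y a) / (s * σs ^ 2) := by ring
      _ ≤ p a * max 1 (2 * (s * σs ^ 2)) / (s * σs ^ 2) := by
          have hmm := mul_le_mul_of_nonneg_left hb (hp0 a)
          exact div_le_div_of_nonneg_right hmm hc.le
      _ = p a * (max 1 (2 * (s * σs ^ 2)) / (s * σs ^ 2)) := by ring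
  have hnormF' : ∀ y a, ‖F' y a‖ ≤ p a * (max 1 (2 * (s * σs ^ 2)) / (s * σs ^ 2)) := by
    intro y a
    simp only [hF'def]
    have h := norm_smul (p a * e y a * (-(1 / (s * σs ^ 2))))
      (innerSL ℝ (y - αs • x₀ - βs • a))
    rw [h, Real.norm_eq_abs, innerSL_apply_norm]
    exact hscal y a
  have h_diff : ∀ a y, HasFDerivAt (fun z => p a * e z a) (F' y a) y := by
    intro a y
    have hid : HasFDerivAt (fun z : EuclideanSpace ℝ (Fin d) => z - αs • x₀ - βs • a)
        (ContinuousLinearMap.id ℝ _) y := ((hasFDerivAt_id y).sub_const (αs • x₀)).sub_const (βs • a)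
    have h3 := hid.norm_sq.const_mul (-(1 / (2 * s * σs ^ 2)))
    have h4 := (Real.hasDerivAt_exp
      (-(1 / (2 * s * σs ^ 2)) * ‖y - αs • x₀ - βs • a‖ ^ 2)).comp_hasFDerivAt y h3
    have h5 := h4.const_mul (p a)
    have hfun : (fun z : EuclideanSpace ℝ (Fin d) => p a * e z a)
        = fun z => p a * Real.exp (-(1 / (2 * s * σs ^ 2)) * ‖z - αs • x₀ - βs • a‖ ^ 2) := by
      funext z
      simp only [hedef]
      congr 1
      congr 1
      ring
    rw [hfun]
    refine h5.congr_fderiv ?_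
    ext w
    simp only [hF'def, hedef, ContinuousLinearMap.coe_smul', Pi.smul_apply,
      ContinuousLinearMap.comp_apply, ContinuousLinearMap.coe_id', id_eq,
      ContinuousLinearMap.smul_apply, innerSL_apply_apply, smul_eq_mul, nsmul_eq_mul]
    have hexp : Real.exp (-‖y - αs • x₀ - βs • a‖ ^ 2 / (2 * s * σs ^ 2))
        = Real.exp (-(1 / (2 * s * σs ^ 2)) * ‖y - αs • x₀ - βs • a‖ ^ 2) := by
      congr 1; ring
    rw [hexp]
    field_simp
    ring
  have bound_int : Integrable
      (fun a => p a * (max 1 (2 * (s * σs ^ 2)) / (s * σs ^ 2))) := hp_int.mul_const _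
  have hF'meas : ∀ x, AEStronglyMeasurable (fun a => F' x a) volume := by
    intro x
    rw [hF'def]
    apply AEStronglyMeasurable.fun_smul
    · exact (hpm.mul (he_cont x).aestronglyMeasurable).mul_const _
    · apply Continuous.aestronglyMeasurable
      exact (innerSL ℝ).continuous.comp (by fun_prop)
  have hF'int : ∀ x, Integrable (fun a => F' x a) := fun x =>
    Integrable.mono' bound_int (hF'meas x) (ae_of_all _ fun a => hnormF' x a)
  have hG_int : ∀ x, Integrable
      (fun a => (p a * e x a * (-(1 / (s * σs ^ 2)))) • (x - αs • x₀ - βs • a)) := by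
    intro x
    refine Integrable.mono' bound_int
      (((hpm.mul (he_cont x).aestronglyMeasurable).mul_const _).smul
        (Continuous.aestronglyMeasurable (by fun_prop)))
      (ae_of_all _ fun a => ?_)
    rw [norm_smul, Real.norm_eq_abs]
    exact hscal x a
  have hderiv : ∀ x, HasGradientAt F (G x) x := by
    intro x
    have key := hasFDerivAt_integral_of_dominated_of_fderiv_le (𝕜 := ℝ)
      (F := fun y a => p a * e y a) (F' := F') (bound := fun a =>
        p a * (max 1 (2 * (s * σs ^ 2)) / (s * σs ^ 2))) Filter.univ_mem
      (Filter.Eventually.of_forall fun y => hpm.mul (he_cont y).aestronglyMeasurable)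
      (hI1 x) (hF'meas x)
      (ae_of_all _ fun a y _ => hnormF' y a) bound_int
      (ae_of_all _ fun a y _ => h_diff a y)
    have heq : (∫ a, F' x a) = (InnerProductSpace.toDual ℝ _) (G x) := by
      ext w
      rw [ContinuousLinearMap.integral_apply (hF'int x)]
      simp only [hF'def, ContinuousLinearMap.smul_apply, innerSL_apply_apply, smul_eq_mul]
      rw [InnerProductSpace.toDual_apply_apply, hGdef, real_inner_comm, ← integral_inner (hG_int x)]
      congr 1
      funext a
      rw [real_inner_smul_right, real_inner_comm]
    rw [hasGradientAt_iff_hasFDerivAt, ← heq]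
    exact key
  refine ⟨fun x => by rw [hID x]; exact mul_pos hK (hFpos x), ?_, ?_⟩
  · have hfun : (fun x => interpDensity p αs βs σs s x x₀) = fun x => K * F x :=
      funext hID
    rw [hfun]
    have hFd : Differentiable ℝ F := fun x => (hderiv x).differentiableAt
    exact hFd.const_mul K
  · intro x
    have hFx := (hFpos x).ne'
    have hKF : K * F x ≠ 0 := (mul_pos hK (hFpos x)).ne'
    have hf := (hderiv x).hasFDerivAt
    have hKf := hf.const_mul K
    have hlogF := hKf.log hKF
    have hsc : (K * F x)⁻¹ • (K • (InnerProductSpace.toDual ℝ _) (G x))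
        = (InnerProductSpace.toDual ℝ _) ((F x)⁻¹ • G x) := by
      rw [smul_smul, _root_.map_smul]
      congr 1
      field_simp
    rw [hsc] at hlogF
    have hgrad : HasGradientAt (fun y => Real.log (interpDensity p αs βs σs s y x₀))
        ((F x)⁻¹ • G x) x := by
      rw [hasGradientAt_iff_hasFDerivAt]
      have hfun : (fun y => Real.log (interpDensity p αs βs σs s y x₀))
          = fun y => Real.log (K * F y) := by
        funext y; rw [hID y]
      rw [hfun]
      exact hlogF
    rw [hgrad.gradient]
    -- final algebra
    have hsplit : (fun a => (p a * e x a * (-(1 / (s * σs ^ 2)))) • (x - αs • x₀ - βs • a))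
        = fun a => (-(1 / (s * σs ^ 2))) • ((p a * e x a) • (x - αs • x₀))
            + (βs / (s * σs ^ 2)) • ((p a * e x a) • a) := by
      funext a
      match_scalars <;> field_simp <;> ring
    have hGx : G x = (-(1 / (s * σs ^ 2))) • ((F x) • (x - αs • x₀))
        + (βs / (s * σs ^ 2)) • (∫ a, (p a * e x a) • a) := by
      have h1 : Integrable
          (fun a => (-(1 / (s * σs ^ 2))) • ((p a * e x a) • (x - αs • x₀))) := by
        exact ((hI1 x).smul_const _).fun_smul _
      have h2 : Integrable
          (fun a => (βs / (s * σs ^ 2)) • ((p a * e x a) • a)) := by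
        exact (hI2 x).fun_smul _
      rw [hGdef]
      simp only
      rw [hsplit, integral_add h1 h2, integral_smul, integral_smul, integral_smul_const]
    have heta : eta1 p αs βs σs s x x₀ = (F x)⁻¹ • ∫ a, (p a * e x a) • a := rfl
    rw [hGx, heta]
    match_scalars <;> (field_simp [hFx]; try ring; try simp)
end

section
/- Let A > 0, β > 0 and σ ≥ 0 be real numbers, and define f(g) = (1 + ½βA(g² − σ²))²/g² for g > 0. Then for all g > 0, f(g) ≥ 2βA·max(0, 1 − ½βAσ²). Moreover, if 1 − ½βAσ² ≠ 0, then equality holds if and only if g² = |1 − ½βAσ²|/(½βA). -/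
/-- Pointwise minimization of the KL integrand over the diffusion coefficient:
for `A, β > 0`, `σ ≥ 0` and `f(g) = (1 + ½βA(g² − σ²))²/g²`, one has
`f(g) ≥ 2βA·max(0, 1 − ½βAσ²)` for all `g > 0`, with equality (when `1 − ½βAσ² ≠ 0`) iff
`g² = |1 − ½βAσ²|/(½βA)`. -/
theorem kl_integrand_min
    (A β σ : ℝ) (hA : 0 < A) (hβ : 0 < β) (hσ : 0 ≤ σ) :
    (∀ g : ℝ, 0 < g →
      2 * β * A * max 0 (1 - β * A * σ ^ 2 / 2)
        ≤ (1 + β * A / 2 * (g ^ 2 - σ ^ 2)) ^ 2 / g ^ 2) ∧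
    (1 - β * A * σ ^ 2 / 2 ≠ 0 →
      ∀ g : ℝ, 0 < g →
        ((1 + β * A / 2 * (g ^ 2 - σ ^ 2)) ^ 2 / g ^ 2
            = 2 * β * A * max 0 (1 - β * A * σ ^ 2 / 2)
          ↔ g ^ 2 = |1 - β * A * σ ^ 2 / 2| / (β * A / 2))) := by
  have hc : 0 < β * A / 2 := by positivity
  constructor
  · intro g hg
    have hg2 : (0:ℝ) < g ^ 2 := by positivity
    rw [le_div_iff₀ hg2]
    rcases le_or_gt (1 - β * A * σ ^ 2 / 2) 0 with hd | hd
    · rw [max_eq_left hd]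
      nlinarith [sq_nonneg (1 + β * A / 2 * (g ^ 2 - σ ^ 2))]
    · rw [max_eq_right hd.le]
      nlinarith [sq_nonneg (1 - β * A * σ ^ 2 / 2 - β * A / 2 * g ^ 2)]
  · intro hne g hg
    have hg2 : (0:ℝ) < g ^ 2 := by positivity
    rcases hne.lt_or_gt with hd | hd
    · rw [max_eq_left hd.le, abs_of_neg hd]
      constructor
      · intro h
        rw [div_eq_iff hg2.ne'] at h
        have h0 : (1 + β * A / 2 * (g ^ 2 - σ ^ 2)) = 0 := by
          nlinarith [sq_nonneg (1 + β * A / 2 * (g ^ 2 - σ ^ 2))]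
        field_simp
        nlinarith
      · intro h
        rw [eq_div_iff hc.ne'] at h
        rw [div_eq_iff hg2.ne']
        nlinarith
    · rw [max_eq_right hd.le, abs_of_pos hd]
      constructor
      · intro h
        rw [div_eq_iff hg2.ne'] at h
        have h0 : 1 - β * A * σ ^ 2 / 2 - β * A / 2 * g ^ 2 = 0 := by
          nlinarith [sq_nonneg (1 - β * A * σ ^ 2 / 2 - β * A / 2 * g ^ 2)]
        field_simp
        nlinarith
      · intro h
        rw [eq_div_iff hc.ne'] at h
        rw [div_eq_iff hg2.ne']
        nlinarith
end
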